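/- arXiv:0706.0204 — 2 statements merged into one kernel-verified Lean document; each statement's English description precedes it below -/
import Mathlib

section
/- For every u ≥ 0, ∑_{k≥1} e^{−uk} (α/Γ(2−α)) · Γ(k+1−α)/(k+1)! = 1 + ((e^u − 1)/(α−1)) · ((1 − e^{−u})^{α−1} − 1). In other words, the Laplace transform of the random variable X with ℙ(X = k) = (α/Γ(2−α)) Γ(k+1−α)/(k+1)! is φ(u) = 1 + ((e^u − 1)/(α−1))((1 − e^{−u})^{α−1} − 1). -/
open MeasureTheory ProbabilityTheory Filter Real Topology

noncomputable section

/-- `λ_{b,k} = ∫_{(0,1)} x^{k-2} (1-x)^{b-k} Λ(dx)`. -/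
def coalRate (Λ : Measure ℝ) (b k : ℕ) : ℝ :=
  ∫ x in Set.Ioo (0 : ℝ) 1, x ^ (k - 2) * (1 - x) ^ (b - k) ∂Λ

/-- `g_b = ∑_{ℓ=1}^{b-1} binom(b, ℓ+1) λ_{b,ℓ+1}`. -/
def coalG (Λ : Measure ℝ) (b : ℕ) : ℝ :=
  ∑ ℓ ∈ Finset.Icc 1 (b - 1), (b.choose (ℓ + 1) : ℝ) * coalRate Λ b (ℓ + 1)

/-- `ρ(t) = ν((t,1])` where `ν(dx) = x^{-2} Λ(dx)`. -/
def coalRho (Λ : Measure ℝ) (t : ℝ) : ℝ :=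
  ∫ x in Set.Ioc t 1, x ^ (-2 : ℤ) ∂Λ

/-- `ρ(t) = C₀ t^{-α} + O(t^{-α+ζ})` on `(0,1]`. -/
def RhoBound (Λ : Measure ℝ) (C₀ α ζ : ℝ) : Prop :=
  ∃ C : ℝ, ∀ t ∈ Set.Ioc (0 : ℝ) 1, |coalRho Λ t - C₀ * t ^ (-α)| ≤ C * t ^ (ζ - α)

/-- `Y` is a Markov chain on the positive integers started at `n`, with `1` absorbing and
one-step transition probabilities `P(b, b-ℓ) = binom(b,ℓ+1) λ_{b,ℓ+1} / g_b`. -/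
def IsCoalChain (Λ : Measure ℝ) {Ω : Type*} [MeasurableSpace Ω] (μ : Measure Ω)
    (Y : ℕ → Ω → ℕ) (n : ℕ) : Prop :=
  (∀ k, Measurable (Y k)) ∧
  (∀ ω, Y 0 ω = n) ∧
  (∀ k ω, 1 ≤ Y k ω) ∧
  (∀ k ω, Y k ω = 1 → Y (k + 1) ω = 1) ∧
  ∀ k (y : ℕ → ℕ) (b ℓ : ℕ), 2 ≤ b → 1 ≤ ℓ → ℓ ≤ b - 1 → y k = b →
    μ {ω | (∀ j ≤ k, Y j ω = y j) ∧ Y (k + 1) ω = b - ℓ}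
      = ENNReal.ofReal ((b.choose (ℓ + 1) : ℝ) * coalRate Λ b (ℓ + 1) / coalG Λ b)
        * μ {ω | ∀ j ≤ k, Y j ω = y j}

/-- `τ_n`, the number of jumps until absorption at `1`. -/
def coalTau {Ω : Type*} (Y : ℕ → Ω → ℕ) (ω : Ω) : ℕ :=
  sInf {k | Y k ω = 1}

/-- `v(t) = ∫_0^t (1 - r/γ)^{-γ} dr`. -/
def vfun (γ : ℝ) (t : ℝ) : ℝ :=
  ∫ r in (0 : ℝ)..t, (1 - r / γ) ^ (-γ)

/-- `L̂_t^{(n)} = ∑_{k=0}^{⌊nt⌋ ∧ (τ_n - 1)} Y_k^{1-α}`. -/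
def Lhat (α : ℝ) {Ω : Type*} (Y : ℕ → Ω → ℕ) (n : ℕ) (t : ℝ) (ω : Ω) : ℝ :=
  ∑ k ∈ Finset.range (min (⌊(n : ℝ) * t⌋₊) (coalTau Y ω - 1) + 1), (Y k ω : ℝ) ^ (1 - α)

/-- `L̃_t^{(n)} = ∑_{k=0}^{⌊nt⌋ ∧ (τ_n - 1)} Y_k / g_{Y_k}`. -/
def Ltilde (Λ : Measure ℝ) {Ω : Type*} (Y : ℕ → Ω → ℕ) (n : ℕ) (t : ℝ) (ω : Ω) : ℝ :=
  ∑ k ∈ Finset.range (min (⌊(n : ℝ) * t⌋₊) (coalTau Y ω - 1) + 1),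
    (Y k ω : ℝ) / coalG Λ (Y k ω)

/-- `L_t^{(n)} = ∑_{k=0}^{⌊nt⌋ ∧ (τ_n - 1)} (Y_k / g_{Y_k}) E_k`. -/
def Llen (Λ : Measure ℝ) {Ω : Type*} (Y : ℕ → Ω → ℕ) (Ex : ℕ → Ω → ℝ) (n : ℕ) (t : ℝ)
    (ω : Ω) : ℝ :=
  ∑ k ∈ Finset.range (min (⌊(n : ℝ) * t⌋₊) (coalTau Y ω - 1) + 1),
    (Y k ω : ℝ) / coalG Λ (Y k ω) * Ex k ω

/-- The exponential random variables `(E_k)` are i.i.d. with mean one and independent of `Y`. -/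
def IsExpFamily {Ω : Type*} [MeasurableSpace Ω] (μ : Measure Ω) (Ex : ℕ → Ω → ℝ)
    (Y : ℕ → ℕ → Ω → ℕ) : Prop :=
  (∀ k, Measurable (Ex k)) ∧
  (∀ k, ∀ s : ℝ, 0 ≤ s → μ {ω | s < Ex k ω} = ENNReal.ofReal (Real.exp (-s))) ∧
  iIndepFun Ex μ ∧
  IndepFun (fun ω (k : ℕ) => Ex k ω) (fun ω (k : ℕ) (n : ℕ) => Y n k ω) μ

end

section LJLAux
open MeasureTheory Real Set

section Aux
variable {α : ℝ}

lemma ljl_summable (hα₁ : 1 < α) (hα₂ : α < 2) {z : ℝ} (hz0 : 0 ≤ z) (hz1 : z < 1) :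
    Summable (fun n : ℕ => Real.Gamma ((n : ℝ) + (2 - α)) / n.factorial * z ^ n) := by
  set β : ℝ := 2 - α with hβ
  apply summable_of_ratio_norm_eventually_le (r := z) hz1
  filter_upwards with n
  have hβ0 : 0 < β := by simp only [hβ]; linarith
  have hΓ : 0 < Real.Gamma ((n : ℝ) + β) := Real.Gamma_pos_of_pos (by positivity)
  have h1 : Real.Gamma ((n : ℝ) + 1 + β) = ((n : ℝ) + β) * Real.Gamma ((n : ℝ) + β) := by
    have := Real.Gamma_add_one (s := (n : ℝ) + β) (by positivity)
    rw [← this]; ring_nf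
  rw [Real.norm_eq_abs, Real.norm_eq_abs, abs_of_nonneg (by positivity),
    abs_of_nonneg (by positivity)]
  push_cast
  rw [h1]
  have hfac : ((n + 1).factorial : ℝ) = ((n : ℝ) + 1) * n.factorial := by
    push_cast [Nat.factorial_succ]; ring
  rw [hfac, pow_succ]
  have hle : ((n : ℝ) + β) / ((n : ℝ) + 1) ≤ 1 := by
    apply div_le_one_of_le₀ <;> [linarith; positivity]
  have hfacpos : (0:ℝ) < n.factorial := by positivity
  calc ((n:ℝ) + β) * Real.Gamma ((n:ℝ) + β) / (((n:ℝ)+1) * n.factorial) * (z^n * z)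
      = (((n:ℝ) + β)/((n:ℝ)+1)) * (z * (Real.Gamma ((n:ℝ)+β) / n.factorial * z^n)) := by
        field_simp
    _ ≤ 1 * (z * (Real.Gamma ((n:ℝ)+β) / n.factorial * z^n)) := by
        apply mul_le_mul_of_nonneg_right hle; positivity
    _ = z * (Real.Gamma ((n:ℝ)+β) / n.factorial * z^n) := by ring

lemma ljl_step1 (hα₁ : 1 < α) (hα₂ : α < 2) {z : ℝ} (hz0 : 0 ≤ z) (hz1 : z < 1) :
    HasSum (fun n : ℕ => Real.Gamma ((n : ℝ) + (2 - α)) / (Real.Gamma (2 - α) * n.factorial)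
      * z ^ n) ((1 - z) ^ (α - 2)) := by
  have hsum := ljl_summable hα₁ hα₂ hz0 hz1
  set β : ℝ := 2 - α with hβ
  have hβ0 : 0 < β := by simp only [hβ]; linarith
  have hΓβ : 0 < Real.Gamma β := Real.Gamma_pos_of_pos hβ0
  have h1z : 0 < 1 - z := by linarith
  have key : (∑' n : ℕ, Real.Gamma ((n : ℝ) + β) / n.factorial * z ^ n)
      = (1 / (1 - z)) ^ β * Real.Gamma β := by
    set f : ℕ → ℝ → ℝ :=
      fun n t => (z ^ n / n.factorial) * (Real.exp (-t) * t ^ ((n : ℝ) + β - 1)) with hf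
    have hΓint : ∀ n : ℕ, ∫ t in Ioi (0:ℝ), f n t
        = Real.Gamma ((n : ℝ) + β) / n.factorial * z ^ n := by
      intro n
      rw [hf]
      simp only
      rw [MeasureTheory.integral_const_mul, ← Real.Gamma_eq_integral (by positivity)]
      ring
    have hfi : ∀ n : ℕ, IntegrableOn (f n) (Ioi (0:ℝ)) := by
      intro n
      exact (Real.GammaIntegral_convergent (s := (n : ℝ) + β) (by positivity)).const_mul _
    have hnonneg : ∀ n : ℕ, ∀ t ∈ Ioi (0:ℝ), 0 ≤ f n t := by
      intro n t ht
      have : (0:ℝ) < t := ht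
      rw [hf]; positivity
    have hswap := MeasureTheory.integral_tsum (μ := volume.restrict (Ioi (0:ℝ))) (f := f)
      (fun n => (hfi n).aestronglyMeasurable) ?_
    · have hlhs : ∫ t in Ioi (0:ℝ), (∑' n : ℕ, f n t)
          = ∫ t in Ioi (0:ℝ), t ^ (β - 1) * Real.exp (-((1 - z) * t)) := by
        refine setIntegral_congr_fun measurableSet_Ioi (fun t ht => ?_)
        have ht0 : (0:ℝ) < t := ht
        have hexp : HasSum (fun n : ℕ => (z * t) ^ n / n.factorial) (Real.exp (z * t)) := by
          rw [Real.exp_eq_exp_ℝ]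
          exact NormedSpace.expSeries_div_hasSum_exp (z * t)
        have h2 : HasSum (fun n : ℕ => f n t)
            (t ^ (β - 1) * Real.exp (-t) * Real.exp (z * t)) := by
          have : HasSum (fun i : ℕ => t ^ (β - 1) * Real.exp (-t) * ((z * t) ^ i / i.factorial))
              (t ^ (β - 1) * Real.exp (-t) * Real.exp (z * t)) :=
            hexp.mul_left (t ^ (β - 1) * Real.exp (-t))
          convert this using 2 with n
          rw [hf]
          simp only
          rw [mul_pow, show ((n:ℝ) + β - 1) = (n:ℝ) + (β - 1) by ring,
            Real.rpow_add ht0, Real.rpow_natCast]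
          field_simp
        rw [h2.tsum_eq, mul_assoc, ← Real.exp_add]
        ring_nf
      rw [hlhs, integral_rpow_mul_exp_neg_mul_Ioi hβ0 h1z] at hswap
      rw [← tsum_congr hΓint, ← hswap]
    · have heq : ∀ n : ℕ, ∫⁻ t, ‖f n t‖ₑ ∂(volume.restrict (Ioi (0:ℝ)))
          = ENNReal.ofReal (Real.Gamma ((n : ℝ) + β) / n.factorial * z ^ n) := by
        intro n
        rw [← hΓint n, MeasureTheory.ofReal_integral_eq_lintegral_ofReal (hfi n)
          ((ae_restrict_iff' measurableSet_Ioi).2 (Filter.Eventually.of_forall (hnonneg n)))]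
        refine lintegral_congr_ae ?_
        filter_upwards [ae_restrict_mem measurableSet_Ioi] with t ht
        rw [← Real.enorm_eq_ofReal (hnonneg n t ht)]
      simp only [heq]
      rw [← ENNReal.ofReal_tsum_of_nonneg (fun n => by positivity) hsum]
      exact ENNReal.ofReal_ne_top
  have hS := (hsum.hasSum).div_const (Real.Gamma β)
  rw [key, mul_div_assoc, div_self hΓβ.ne', mul_one] at hS
  have hval : (1 / (1 - z)) ^ β = (1 - z) ^ (α - 2) := by
    rw [one_div, Real.inv_rpow h1z.le, ← Real.rpow_neg h1z.le]
    congr 1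
    simp only [hβ]; ring
  rw [hval] at hS
  have h2 : (fun n : ℕ => Real.Gamma ((n : ℝ) + (2 - α)) / (Real.Gamma (2 - α) * n.factorial)
      * z ^ n) = fun n : ℕ => Real.Gamma ((n : ℝ) + β) / n.factorial * z ^ n / Real.Gamma β := by
    funext n; rw [hβ]; ring
  rw [h2]
  exact hS

end Aux

section S2
variable {α : ℝ}

lemma ljl_step2 (hα₁ : 1 < α) (hα₂ : α < 2) {x : ℝ} (hx0 : 0 < x) (hx1 : x < 1) :
    HasSum (fun n : ℕ => Real.Gamma ((n : ℝ) + (2 - α)) / (Real.Gamma (2 - α) * (n + 2).factorial)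
      * x ^ (n + 2))
      ((1 - (1 - x) ^ α) / α - (1 - x) * (1 - (1 - x) ^ (α - 1)) / (α - 1)) := by
  have hΓ2α : 0 < Real.Gamma (2 - α) := Real.Gamma_pos_of_pos (by linarith)
  have hΓn : ∀ n : ℕ, 0 < Real.Gamma ((n : ℝ) + (2 - α)) := fun n =>
    Real.Gamma_pos_of_pos (add_pos_of_nonneg_of_pos (Nat.cast_nonneg n) (by linarith))
  -- summability
  have hb : Summable (fun n : ℕ => Real.Gamma ((n : ℝ) + (2 - α))
      / (Real.Gamma (2 - α) * (n + 2).factorial) * x ^ (n + 2)) := by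
    refine Summable.of_nonneg_of_le (fun n => mul_nonneg (div_nonneg (hΓn n).le
      (mul_nonneg hΓ2α.le (by positivity))) (by positivity)) (fun n => ?_)
      (((ljl_summable hα₁ hα₂ hx0.le hx1).mul_left (1 / Real.Gamma (2 - α))))
    have h1 : x ^ (n + 2) ≤ x ^ n := pow_le_pow_of_le_one hx0.le hx1.le (by omega)
    have h2 : (n.factorial : ℝ) ≤ ((n + 2).factorial : ℝ) := by
      exact_mod_cast Nat.factorial_le (by omega)
    calc Real.Gamma ((n : ℝ) + (2 - α)) / (Real.Gamma (2 - α) * (n + 2).factorial) * x ^ (n + 2)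
        ≤ Real.Gamma ((n : ℝ) + (2 - α)) / (Real.Gamma (2 - α) * n.factorial) * x ^ n := by
          have hd : (0:ℝ) < Real.Gamma (2 - α) * n.factorial :=
            mul_pos hΓ2α (by positivity)
          refine mul_le_mul ?_ h1 (by positivity) (div_nonneg (hΓn n).le hd.le)
          exact div_le_div_of_nonneg_left (hΓn n).le hd
            (mul_le_mul_of_nonneg_left h2 hΓ2α.le)
      _ = 1 / Real.Gamma (2 - α) * (Real.Gamma ((n : ℝ) + (2 - α)) / n.factorial * x ^ n) := by
          ring
  -- integral representation of each coefficient
  have h1x : ∀ p : ℝ, -1 < p →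
      ∫ z in (0:ℝ)..x, (1 - z) ^ p = (1 - (1 - x) ^ (p + 1)) / (p + 1) := by
    intro p hp
    rw [intervalIntegral.integral_comp_sub_left (fun w => w ^ p) 1]
    rw [integral_rpow (Or.inl hp)]
    norm_num
  have hii : ∀ p : ℝ, IntervalIntegrable (fun z => (1 - z) ^ p) volume 0 x := by
    intro p
    apply ContinuousOn.intervalIntegrable
    apply ContinuousOn.rpow_const
    · exact continuousOn_const.sub continuousOn_id
    · intro z hz
      rw [uIcc_of_le hx0.le] at hz
      left
      have : z ≤ x := hz.2
      have : z < 1 := lt_of_le_of_lt this hx1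
      linarith
  set g : ℕ → ℝ → ℝ := fun n z =>
    Real.Gamma ((n : ℝ) + (2 - α)) / (Real.Gamma (2 - α) * n.factorial) * ((x - z) * z ^ n)
    with hg
  have hgint : ∀ n : ℕ, ∫ z in Ioo (0:ℝ) x, g n z
      = Real.Gamma ((n : ℝ) + (2 - α)) / (Real.Gamma (2 - α) * (n + 2).factorial)
        * x ^ (n + 2) := by
    intro n
    have hz : ∫ z in Ioo (0:ℝ) x, (x - z) * z ^ n
        = x ^ (n + 2) / (((n : ℝ) + 1) * ((n : ℝ) + 2)) := by
      rw [← MeasureTheory.integral_Ioc_eq_integral_Ioo,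
        ← intervalIntegral.integral_of_le hx0.le]
      have : ∀ z : ℝ, (x - z) * z ^ n = x * z ^ n - z ^ (n + 1) := by
        intro z; rw [pow_succ]; ring
      simp_rw [this]
      rw [intervalIntegral.integral_sub ((intervalIntegral.intervalIntegrable_pow n).const_mul x)
        (intervalIntegral.intervalIntegrable_pow (n + 1)),
        intervalIntegral.integral_const_mul, integral_pow, integral_pow]
      have hn1 : ((n : ℝ) + 1) ≠ 0 := by positivity
      have hn2 : ((n : ℝ) + 2) ≠ 0 := by positivity
      push_cast
      field_simp
      ring
    rw [hg]
    simp only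
    rw [MeasureTheory.integral_const_mul, hz]
    have hfac : (((n + 2).factorial : ℝ)) = ((n : ℝ) + 2) * (((n : ℝ) + 1)) * n.factorial := by
      push_cast [Nat.factorial_succ]
      ring
    rw [hfac]
    have hn1 : ((n : ℝ) + 1) ≠ 0 := by positivity
    have hn2 : ((n : ℝ) + 2) ≠ 0 := by positivity
    have hfn : (n.factorial : ℝ) ≠ 0 := by positivity
    field_simp
    try ring
    try exact Or.inl trivial
  have hgi : ∀ n : ℕ, IntegrableOn (g n) (Ioo (0:ℝ) x) := by
    intro n
    have hc : Continuous (g n) := by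
      rw [hg]
      exact continuous_const.mul ((continuous_const.sub continuous_id).mul (continuous_pow n))
    exact (hc.integrableOn_Icc).mono_set Ioo_subset_Icc_self
  have hgnonneg : ∀ n : ℕ, ∀ z ∈ Ioo (0:ℝ) x, 0 ≤ g n z := by
    intro n z hz
    have h1 : (0:ℝ) < z := hz.1
    have h2 : z < x := hz.2
    have h3 : (0:ℝ) ≤ x - z := by linarith
    rw [hg]
    have := (hΓn n).le
    positivity
  have hswap := MeasureTheory.integral_tsum (μ := volume.restrict (Ioo (0:ℝ) x)) (f := g)
    (fun n => (hgi n).aestronglyMeasurable) ?_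
  · -- evaluate both sides of hswap
    have hlhs : ∫ z in Ioo (0:ℝ) x, (∑' n : ℕ, g n z)
        = (1 - (1 - x) ^ α) / α - (1 - x) * (1 - (1 - x) ^ (α - 1)) / (α - 1) := by
      have hptw : ∀ z ∈ Ioo (0:ℝ) x, (∑' n : ℕ, g n z)
          = (1 - z) ^ (α - 1) - (1 - x) * (1 - z) ^ (α - 2) := by
        intro z hz
        have hz0 : (0:ℝ) ≤ z := hz.1.le
        have hz1 : z < 1 := lt_trans hz.2 hx1
        have hz1' : (0:ℝ) < 1 - z := by linarith
        have hS := (ljl_step1 hα₁ hα₂ hz0 hz1).mul_left (x - z)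
        have hfe : (fun n : ℕ => (x - z) * (Real.Gamma ((n : ℝ) + (2 - α))
            / (Real.Gamma (2 - α) * n.factorial) * z ^ n)) = fun n => g n z := by
          funext n; rw [hg]; ring
        rw [hfe] at hS
        rw [hS.tsum_eq]
        have : (x - z) = (1 - z) - (1 - x) := by ring
        rw [this, sub_mul, mul_comm (1 - z) ((1 - z) ^ (α - 2)),
          ← Real.rpow_add_one (ne_of_gt hz1') (α - 2),
          show α - 2 + 1 = α - 1 by ring]
      rw [setIntegral_congr_fun measurableSet_Ioo hptw,
        ← MeasureTheory.integral_Ioc_eq_integral_Ioo, ← intervalIntegral.integral_of_le hx0.le,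
        intervalIntegral.integral_sub (hii (α - 1)) ((hii (α - 2)).const_mul (1 - x)),
        intervalIntegral.integral_const_mul, h1x (α - 1) (by linarith),
        h1x (α - 2) (by linarith)]
      rw [show α - 1 + 1 = α by ring, show α - 2 + 1 = α - 1 by ring]
      ring
    rw [hlhs, tsum_congr hgint] at hswap
    exact hswap ▸ hb.hasSum
  · -- finiteness
    have heq : ∀ n : ℕ, ∫⁻ z, ‖g n z‖ₑ ∂(volume.restrict (Ioo (0:ℝ) x))
        = ENNReal.ofReal (Real.Gamma ((n : ℝ) + (2 - α))
          / (Real.Gamma (2 - α) * (n + 2).factorial) * x ^ (n + 2)) := by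
      intro n
      rw [← hgint n, MeasureTheory.ofReal_integral_eq_lintegral_ofReal (hgi n)
        ((ae_restrict_iff' measurableSet_Ioo).2 (Filter.Eventually.of_forall (hgnonneg n)))]
      refine lintegral_congr_ae ?_
      filter_upwards [ae_restrict_mem measurableSet_Ioo] with z hz
      rw [← Real.enorm_eq_ofReal (hgnonneg n z hz)]
    simp only [heq]
    rw [← ENNReal.ofReal_tsum_of_nonneg (fun n => mul_nonneg (div_nonneg (hΓn n).le
      (mul_nonneg hΓ2α.le (by positivity))) (by positivity)) hb]
    exact ENNReal.ofReal_ne_top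

end S2

lemma ljl_telescope {α : ℝ} (hα₁ : 1 < α) (hα₂ : α < 2) :
    HasSum (fun k : ℕ => α / Real.Gamma (2 - α)
      * (Real.Gamma ((k : ℝ) + (2 - α)) / (k + 2).factorial)) 1 := by
  have hΓ2α : 0 < Real.Gamma (2 - α) := Real.Gamma_pos_of_pos (by linarith)
  have hΓn : ∀ n : ℕ, 0 < Real.Gamma ((n : ℝ) + (2 - α)) := fun n =>
    Real.Gamma_pos_of_pos (add_pos_of_nonneg_of_pos (Nat.cast_nonneg n) (by linarith))
  set B : ℕ → ℝ := fun k => Real.Gamma ((k : ℝ) + (2 - α))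
    / (Real.Gamma (2 - α) * (k + 1).factorial) with hB
  have hBpos : ∀ k, 0 < B k := fun k => div_pos (hΓn k) (mul_pos hΓ2α (by positivity))
  have hdiff : ∀ k : ℕ, α / Real.Gamma (2 - α)
      * (Real.Gamma ((k : ℝ) + (2 - α)) / (k + 2).factorial) = B k - B (k + 1) := by
    intro k
    have hrec : Real.Gamma (((k : ℕ) + 1 : ℕ) + (2 - α))
        = ((k : ℝ) + (2 - α)) * Real.Gamma ((k : ℝ) + (2 - α)) := by
      push_cast
      rw [show (k : ℝ) + 1 + (2 - α) = ((k : ℝ) + (2 - α)) + 1 by ring]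
      exact Real.Gamma_add_one (ne_of_gt (add_pos_of_nonneg_of_pos (Nat.cast_nonneg k) (by linarith)))
    rw [hB]
    simp only
    rw [hrec]
    have hf1 : (((k + 1) + 1).factorial : ℝ) = ((k : ℝ) + 2) * ((k + 1).factorial : ℝ) := by
      push_cast [Nat.factorial_succ]; ring
    have hf2 : (((k : ℕ) + 2).factorial : ℝ) = ((k : ℝ) + 2) * ((k + 1).factorial : ℝ) := by
      push_cast [Nat.factorial_succ]; ring
    rw [show ((k : ℕ) + 1 + 1 : ℕ) = (k + 2 : ℕ) by ring] at *
    rw [hf2]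
    have h1 : ((k + 1).factorial : ℝ) ≠ 0 := by positivity
    have h2 : ((k : ℝ) + 2) ≠ 0 := by positivity
    field_simp
    ring
  have hB0 : B 0 = 1 := by
    rw [hB]
    simp only [Nat.cast_zero, zero_add, Nat.factorial_one, Nat.cast_one, mul_one]
    exact div_self hΓ2α.ne'
  -- B tends to 0
  have hBle : ∀ k : ℕ, 2 ≤ k → B k ≤ 1 / (Real.Gamma (2 - α) * ((k : ℝ) + 1)) := by
    intro k hk
    have hk2 : (2 : ℝ) ≤ (k : ℝ) + (2 - α) := by
      have : (2 : ℝ) ≤ (k : ℝ) := by exact_mod_cast hk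
      linarith
    have hmono : Real.Gamma ((k : ℝ) + (2 - α)) ≤ Real.Gamma ((k : ℝ) + 1) := by
      rcases eq_or_lt_of_le (show (k : ℝ) + (2 - α) ≤ (k : ℝ) + 1 by linarith) with h | h
      · rw [h]
      · exact le_of_lt (Real.Gamma_strictMonoOn_Ici hk2
          (by simp only [Set.mem_Ici]; linarith) h)
    have hΓk1 : Real.Gamma ((k : ℝ) + 1) = (k.factorial : ℝ) := by
      exact_mod_cast Real.Gamma_nat_eq_factorial k
    have hfs : ((k + 1).factorial : ℝ) = ((k : ℝ) + 1) * (k.factorial : ℝ) := by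
      push_cast [Nat.factorial_succ]; ring
    rw [hB]
    simp only
    rw [div_le_div_iff₀ (mul_pos hΓ2α (by positivity)) (by positivity)]
    rw [hfs]
    calc Real.Gamma ((k : ℝ) + (2 - α)) * (Real.Gamma (2 - α) * ((k : ℝ) + 1))
        ≤ (k.factorial : ℝ) * (Real.Gamma (2 - α) * ((k : ℝ) + 1)) := by
          apply mul_le_mul_of_nonneg_right (hmono.trans_eq hΓk1)
          positivity
      _ = 1 * (Real.Gamma (2 - α) * (((k : ℝ) + 1) * (k.factorial : ℝ))) := by ring
  have hBtend : Filter.Tendsto B Filter.atTop (nhds 0) := by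
    have h0 : Filter.Tendsto (fun k : ℕ => 1 / (Real.Gamma (2 - α) * ((k : ℝ) + 1)))
        Filter.atTop (nhds 0) := by
      apply Filter.Tendsto.div_atTop (tendsto_const_nhds)
      apply Filter.Tendsto.const_mul_atTop hΓ2α
      exact Filter.tendsto_atTop_add_const_right _ _ tendsto_natCast_atTop_atTop
    refine squeeze_zero_norm' ?_ h0
    filter_upwards [Filter.eventually_ge_atTop 2] with k hk
    rw [Real.norm_eq_abs, abs_of_pos (hBpos k)]
    exact hBle k hk
  -- telescoping
  have hsummable : Summable (fun k : ℕ => α / Real.Gamma (2 - α)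
      * (Real.Gamma ((k : ℝ) + (2 - α)) / (k + 2).factorial)) := by
    apply summable_of_sum_range_le (c := B 0)
    · intro k
      rw [hdiff k]
      have := hBpos k
      have h2 : B (k + 1) ≤ B k := by
        have := hdiff k
        have hterm : 0 ≤ α / Real.Gamma (2 - α)
            * (Real.Gamma ((k : ℝ) + (2 - α)) / (k + 2).factorial) := by
          apply mul_nonneg (div_nonneg (by linarith) hΓ2α.le)
          exact div_nonneg (hΓn k).le (by positivity)
        linarith
      linarith
    · intro n
      rw [Finset.sum_congr rfl (fun k _ => hdiff k), Finset.sum_range_sub' B n]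
      have := hBpos n
      linarith
  rw [hsummable.hasSum_iff_tendsto_nat]
  have : (fun n : ℕ => ∑ k ∈ Finset.range n, α / Real.Gamma (2 - α)
      * (Real.Gamma ((k : ℝ) + (2 - α)) / (k + 2).factorial)) = fun n => B 0 - B n := by
    funext n
    rw [Finset.sum_congr rfl (fun k _ => hdiff k), Finset.sum_range_sub' B n]
  rw [this, hB0]
  have := hBtend.const_sub 1
  simpa using this


end LJLAux

/-- the Laplace transform of the law `ℙ(X = k) = (α/Γ(2-α)) Γ(k+1-α)/(k+1)!`,
`k ≥ 1`, is `φ(u) = 1 + ((e^u - 1)/(α-1))((1 - e^{-u})^{α-1} - 1)` for `u ≥ 0`. -/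
theorem limit_jump_law_laplace_transform
    (α : ℝ) (hα₁ : 1 < α) (hα₂ : α < 2) :
    ∀ u : ℝ, 0 ≤ u →
      (∑' k : ℕ, Real.exp (-u * ((k : ℝ) + 1)) *
        (α / Real.Gamma (2 - α) *
          (Real.Gamma (((k : ℝ) + 1) + 1 - α) / ((k + 2).factorial : ℝ))))
      = 1 + (Real.exp u - 1) / (α - 1) * ((1 - Real.exp (-u)) ^ (α - 1) - 1) := by
  intro u hu
  have hΓ2α : 0 < Real.Gamma (2 - α) := Real.Gamma_pos_of_pos (by linarith)
  rcases eq_or_lt_of_le hu with h0 | hupos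
  · -- u = 0
    subst h0
    have h1 : ∀ k : ℕ, Real.exp (-0 * ((k : ℝ) + 1)) * (α / Real.Gamma (2 - α)
        * (Real.Gamma (((k : ℝ) + 1) + 1 - α) / ((k + 2).factorial : ℝ)))
        = α / Real.Gamma (2 - α) * (Real.Gamma ((k : ℝ) + (2 - α)) / ((k + 2).factorial : ℝ)) := by
      intro k
      rw [show ((k : ℝ) + 1) + 1 - α = (k : ℝ) + (2 - α) by ring]
      norm_num
    rw [tsum_congr h1, (ljl_telescope hα₁ hα₂).tsum_eq]
    norm_num
  · -- u > 0
    set x : ℝ := Real.exp (-u) with hx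
    have hx0 : 0 < x := Real.exp_pos _
    have hx1 : x < 1 := Real.exp_lt_one_iff.mpr (by linarith)
    have hS := ljl_step2 hα₁ hα₂ hx0 hx1
    have hterm : ∀ k : ℕ, Real.exp (-u * ((k : ℝ) + 1)) *
        (α / Real.Gamma (2 - α) * (Real.Gamma (((k : ℝ) + 1) + 1 - α) / ((k + 2).factorial : ℝ)))
        = (α / x) * (Real.Gamma ((k : ℝ) + (2 - α))
          / (Real.Gamma (2 - α) * (k + 2).factorial) * x ^ (k + 2)) := by
      intro k
      have hexpk : Real.exp (-u * ((k : ℝ) + 1)) = x ^ (k + 1) := by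
        rw [hx, ← Real.exp_nat_mul]
        congr 1
        push_cast
        ring
      rw [hexpk, show (k : ℝ) + 1 + 1 - α = (k : ℝ) + (2 - α) by ring, pow_succ]
      have hfk : ((k + 2).factorial : ℝ) ≠ 0 := by positivity
      field_simp
      ring
    rw [tsum_congr hterm, tsum_mul_left, hS.tsum_eq]
    -- algebra
    have hs0 : 0 < 1 - x := by linarith
    have hsα : (1 - x) ^ α = (1 - x) ^ (α - 1) * (1 - x) := by
      rw [← Real.rpow_add_one hs0.ne' (α - 1), show α - 1 + 1 = α by ring]
    have hexpu : Real.exp u = 1 / x := by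
      rw [hx, one_div, Real.exp_neg, inv_inv]
    rw [hsα, hexpu]
    set A : ℝ := (1 - x) ^ (α - 1)
    have hα1 : α - 1 ≠ 0 := by linarith
    have hαne : α ≠ 0 := by linarith
    field_simp
    ring
end

section
/- There exists a finite constant C such that for all n ≥ 2 and all t ≥ 0, E[(L_t^{(n)} − L̃_t^{(n)})²] ≤ C n^{3−2α} if α < 3/2, E[(L_t^{(n)} − L̃_t^{(n)})²] ≤ C log(n) if α = 3/2, and E[(L_t^{(n)} − L̃_t^{(n)})²] ≤ C if α > 3/2. -/
open MeasureTheory ProbabilityTheory Filter Real Topology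

open Set


lemma aux_tele (F : ℕ → ℝ) (n : ℕ) (hn : 1 ≤ n) :
    ∑ b ∈ Finset.Icc 2 n, (F b - F (b-1)) = F n - F 1 := by
  induction n, hn using Nat.le_induction with
  | base => simp
  | succ n hn ih =>
      rw [Finset.sum_Icc_succ_top (by omega : 2 ≤ n+1), ih]
      simp only [Nat.add_sub_cancel]
      ring

lemma aux_rpow_step {p : ℝ} (hp0 : 0 < p) (hp1 : p < 1) {x : ℝ} (hx : 1 ≤ x) :
    p * (x + 1) ^ (p - 1) ≤ (x + 1) ^ p - x ^ p := by
  have hx0 : (0:ℝ) < x := lt_of_lt_of_le one_pos hx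
  have hlt : x < x + 1 := by linarith
  have hcont : ContinuousOn (fun y : ℝ => y ^ p) (Icc x (x+1)) := by
    intro y hy
    have hy0 : y ≠ 0 := by have := hy.1; intro h; rw [h] at this; linarith
    exact ((Real.hasDerivAt_rpow_const (Or.inl hy0)).continuousAt).continuousWithinAt
  have hderiv : ∀ y ∈ Ioo x (x+1), HasDerivAt (fun y : ℝ => y ^ p) (p * y ^ (p-1)) y := by
    intro y hy
    have hy0 : y ≠ 0 := by have := hy.1; intro h; rw [h] at this; linarith
    exact Real.hasDerivAt_rpow_const (Or.inl hy0)
  obtain ⟨c, hc, hceq⟩ := exists_hasDerivAt_eq_slope (fun y : ℝ => y ^ p)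
    (fun y => p * y ^ (p-1)) hlt hcont hderiv
  have hslope : (x+1) ^ p - x ^ p = p * c ^ (p-1) := by
    rw [hceq]; field_simp; ring
  rw [hslope]
  have hc0 : (0:ℝ) < c := lt_trans hx0 hc.1
  have : (x+1) ^ (p-1) ≤ c ^ (p-1) :=
    Real.rpow_le_rpow_of_nonpos hc0 hc.2.le (by linarith)
  nlinarith [this]

lemma aux_sum_rpow_lt {α : ℝ} (hα1 : 1 < α) (hα2 : α < 3/2) (n : ℕ) (hn : 1 ≤ n) :
    ∑ b ∈ Finset.Icc 2 n, (b:ℝ) ^ (2 - 2*α) ≤ (n:ℝ) ^ (3 - 2*α) / (3 - 2*α) := by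
  set p : ℝ := 3 - 2*α with hp
  have hp0 : 0 < p := by simp only [hp]; linarith
  have hp1 : p < 1 := by simp only [hp]; linarith
  have hstep : ∀ b ∈ Finset.Icc 2 n, (b:ℝ) ^ (2-2*α) ≤
      (((b:ℝ)) ^ p - (((b-1 : ℕ)):ℝ) ^ p) / p := by
    intro b hb
    obtain ⟨hb2, hbn⟩ := Finset.mem_Icc.1 hb
    have hcast : (((b-1:ℕ)):ℝ) = (b:ℝ) - 1 := by
      have : (1:ℕ) ≤ b := by omega
      push_cast [Nat.cast_sub this]; ring
    have hx : (1:ℝ) ≤ (b:ℝ) - 1 := by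
      have : (2:ℝ) ≤ (b:ℝ) := by exact_mod_cast hb2
      linarith
    have key := aux_rpow_step hp0 hp1 hx
    have hbe : ((b:ℝ) - 1) + 1 = (b:ℝ) := by ring
    rw [hbe] at key
    have h2 : 2 - 2*α = p - 1 := by simp only [hp]; ring
    rw [h2, le_div_iff₀ hp0, mul_comm, hcast]
    exact key
  calc ∑ b ∈ Finset.Icc 2 n, (b:ℝ) ^ (2 - 2*α)
      ≤ ∑ b ∈ Finset.Icc 2 n, (((b:ℝ)) ^ p - (((b-1:ℕ)):ℝ) ^ p) / p :=
        Finset.sum_le_sum hstep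
    _ = (∑ b ∈ Finset.Icc 2 n, (((b:ℝ)) ^ p - (((b-1:ℕ)):ℝ) ^ p)) / p :=
        (Finset.sum_div _ _ _).symm
    _ ≤ (n:ℝ) ^ p / p := by
        gcongr
        rw [aux_tele (fun i : ℕ => ((i:ℝ)) ^ p) n hn]
        have h1 : ((1:ℕ):ℝ) ^ p = 1 := by norm_num
        have h2 : (0:ℝ) ≤ (n:ℝ) ^ p := by positivity
        simp only [h1]
        linarith
    _ = (n:ℝ) ^ (3 - 2*α) / (3 - 2*α) := rfl

lemma aux_sum_rpow_eq (n : ℕ) (hn : 1 ≤ n) :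
    ∑ b ∈ Finset.Icc 2 n, (b:ℝ) ^ (-1 : ℝ) ≤ Real.log n := by
  have hstep : ∀ b ∈ Finset.Icc 2 n, (b:ℝ) ^ (-1:ℝ) ≤
      Real.log b - Real.log ((b-1:ℕ)) := by
    intro b hb
    obtain ⟨hb2, hbn⟩ := Finset.mem_Icc.1 hb
    have hb2' : (2:ℝ) ≤ (b:ℝ) := by exact_mod_cast hb2
    have hcast : (((b-1:ℕ)):ℝ) = (b:ℝ) - 1 := by
      have : (1:ℕ) ≤ b := by omega
      push_cast [Nat.cast_sub this]; ring
    have hbpos : (0:ℝ) < b := by linarith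
    have h1pos : (0:ℝ) < (b:ℝ) - 1 := by linarith
    have hlog := Real.log_le_sub_one_of_pos (show (0:ℝ) < ((b:ℝ)-1)/b by positivity)
    rw [Real.log_div (by linarith) (by linarith)] at hlog
    rw [Real.rpow_neg_one, hcast]
    have : ((b:ℝ)-1)/b - 1 = -(1/b) := by field_simp; ring
    rw [this] at hlog
    have hinv : ((b:ℝ))⁻¹ = 1/(b:ℝ) := (one_div (b:ℝ)).symm
    rw [hinv]
    linarith
  calc ∑ b ∈ Finset.Icc 2 n, (b:ℝ) ^ (-1:ℝ)
      ≤ ∑ b ∈ Finset.Icc 2 n, (Real.log b - Real.log ((b-1:ℕ))) :=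
        Finset.sum_le_sum hstep
    _ = Real.log n - Real.log ((1:ℕ)) := aux_tele (fun i : ℕ => Real.log (i:ℝ)) n hn
    _ ≤ Real.log n := by simp

lemma aux_sum_rpow_gt {α : ℝ} (hα : 3/2 < α) (n : ℕ) :
    ∑ b ∈ Finset.Icc 2 n, (b:ℝ) ^ (2 - 2*α) ≤ ∑' b : ℕ, (b:ℝ) ^ (2-2*α) := by
  have hsum : Summable (fun b : ℕ => (b:ℝ) ^ (2-2*α)) :=
    Real.summable_nat_rpow.2 (by linarith)
  exact Summable.sum_le_tsum _ (fun i _ => Real.rpow_nonneg (Nat.cast_nonneg i) _) hsum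


lemma aux_exp_moments {Ω : Type*} [MeasurableSpace Ω] (μ : Measure Ω) [IsProbabilityMeasure μ]
    (X : Ω → ℝ) (hm : Measurable X)
    (htail : ∀ s : ℝ, 0 ≤ s → μ {ω | s < X ω} = ENNReal.ofReal (Real.exp (-s))) :
    Integrable X μ ∧ (∫ ω, X ω ∂μ) = 1 ∧
      Integrable (fun ω => X ω ^ 2) μ ∧ (∫ ω, X ω ^ 2 ∂μ) = 2 := by
  have hset : MeasurableSet {ω | (0:ℝ) < X ω} := measurableSet_lt measurable_const hm
  have h0 : μ {ω | (0:ℝ) < X ω} = 1 := by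
    rw [htail 0 le_rfl]; simp
  have hnn : 0 ≤ᵐ[μ] X := by
    have hcompl : μ {ω | (0:ℝ) < X ω}ᶜ = 0 := by
      rw [measure_compl hset (measure_ne_top μ _), h0, measure_univ, tsub_self]
    filter_upwards [measure_eq_zero_iff_ae_notMem.1 hcompl] with ω hω
    exact le_of_lt (by simpa using hω)
  have htail_ae : ∀ᵐ t ∂(volume.restrict (Ioi (0:ℝ))),
      μ {a | t < X a} = ENNReal.ofReal (Real.exp (-t)) := by
    filter_upwards [ae_restrict_mem measurableSet_Ioi] with t ht
    exact htail t (le_of_lt ht)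
  -- first moment
  have hint_exp : IntegrableOn (fun t : ℝ => Real.exp (-t)) (Ioi 0) volume := by
    have h := Real.GammaIntegral_convergent (one_pos)
    refine h.congr_fun (fun t ht => ?_) measurableSet_Ioi
    simp
  have key1 : ∫⁻ ω, ENNReal.ofReal (X ω) ∂μ = ENNReal.ofReal 1 := by
    rw [lintegral_eq_lintegral_meas_lt μ hnn hm.aemeasurable, lintegral_congr_ae htail_ae,
      ← ofReal_integral_eq_lintegral_ofReal hint_exp
        (by filter_upwards with t using (Real.exp_pos _).le)]
    congr 1
    have hΓ : ∫ x in Ioi (0:ℝ), Real.exp (-x) * x ^ ((1:ℝ)-1) = 1 := by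
      rw [← Real.Gamma_eq_integral one_pos]; exact Real.Gamma_one
    rw [← hΓ]
    refine setIntegral_congr_fun measurableSet_Ioi (fun t ht => ?_)
    norm_num
  have hint1 : Integrable X μ := by
    refine ⟨hm.aestronglyMeasurable, ?_⟩
    rw [hasFiniteIntegral_iff_norm]
    have h : ∫⁻ a, ENNReal.ofReal ‖X a‖ ∂μ = ∫⁻ a, ENNReal.ofReal (X a) ∂μ := by
      apply lintegral_congr_ae
      filter_upwards [hnn] with ω hω
      rw [Real.norm_eq_abs, abs_of_nonneg hω]
    rw [h, key1]
    exact ENNReal.ofReal_lt_top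
  have hm1 : (∫ ω, X ω ∂μ) = 1 := by
    rw [integral_eq_lintegral_of_nonneg_ae hnn hm.aestronglyMeasurable, key1]
    simp
  -- second moment
  have hnn2 : 0 ≤ᵐ[μ] fun ω => X ω ^ 2 := Filter.Eventually.of_forall fun ω => sq_nonneg _
  have hΓ2 : Real.Gamma 2 = 1 := by
    have : (2:ℝ) = 1 + 1 := by norm_num
    rw [this, Real.Gamma_add_one one_ne_zero, Real.Gamma_one, one_mul]
  have hint_texp : IntegrableOn (fun t : ℝ => Real.exp (-t) * t) (Ioi 0) volume := by
    have h := Real.GammaIntegral_convergent (show (0:ℝ) < 2 by norm_num)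
    refine h.congr_fun (fun t ht => ?_) measurableSet_Ioi
    norm_num
  have hIv : ∫ t in Ioi (0:ℝ), Real.exp (-t) * t = 1 := by
    have hΓ : ∫ x in Ioi (0:ℝ), Real.exp (-x) * x ^ ((2:ℝ)-1) = 1 := by
      rw [← Real.Gamma_eq_integral (show (0:ℝ) < 2 by norm_num)]; exact hΓ2
    rw [← hΓ]
    refine setIntegral_congr_fun measurableSet_Ioi (fun t ht => ?_)
    norm_num
  have key2 : ∫⁻ ω, ENNReal.ofReal (X ω ^ 2) ∂μ = ENNReal.ofReal 2 := by
    have hg_int : ∀ t : ℝ, t > 0 → IntervalIntegrable (fun s : ℝ => 2*s) volume 0 t :=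
      fun t _ => (continuous_const.mul continuous_id).intervalIntegrable 0 t
    have hg_nn : ∀ᵐ t ∂(volume.restrict (Ioi (0:ℝ))), 0 ≤ 2*t := by
      filter_upwards [ae_restrict_mem measurableSet_Ioi] with t ht
      have : (0:ℝ) < t := ht
      linarith
    have layer := lintegral_comp_eq_lintegral_meas_lt_mul μ hnn hm.aemeasurable hg_int hg_nn
    have hLHS : ∀ ω, ENNReal.ofReal (∫ s in (0:ℝ)..(X ω), 2*s) = ENNReal.ofReal (X ω ^ 2) := by
      intro ω
      congr 1
      rw [intervalIntegral.integral_const_mul, integral_id]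
      ring
    simp_rw [hLHS] at layer
    rw [layer]
    have hint2' : IntegrableOn (fun t : ℝ => Real.exp (-t) * (2*t)) (Ioi 0) volume := by
      have h2 : IntegrableOn (fun t : ℝ => 2 * (Real.exp (-t) * t)) (Ioi 0) volume :=
        hint_texp.const_mul 2
      refine h2.congr_fun (fun t ht => by ring) measurableSet_Ioi
    have hRHS : ∀ᵐ t ∂(volume.restrict (Ioi (0:ℝ))),
        μ {a | t < X a} * ENNReal.ofReal (2*t) = ENNReal.ofReal (Real.exp (-t) * (2*t)) := by
      filter_upwards [htail_ae, ae_restrict_mem measurableSet_Ioi] with t h1 h2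
      rw [h1, ← ENNReal.ofReal_mul (Real.exp_pos _).le]
    rw [lintegral_congr_ae hRHS,
      ← ofReal_integral_eq_lintegral_ofReal hint2' ?nn]
    case nn =>
      filter_upwards [ae_restrict_mem measurableSet_Ioi] with t ht
      have : (0:ℝ) < t := ht
      positivity
    congr 1
    have : ∫ t in Ioi (0:ℝ), Real.exp (-t) * (2*t) = 2 * ∫ t in Ioi (0:ℝ), Real.exp (-t) * t := by
      rw [← integral_const_mul]
      exact setIntegral_congr_fun measurableSet_Ioi (fun t ht => by ring)
    rw [this, hIv]
    norm_num
  have hint2 : Integrable (fun ω => X ω ^ 2) μ := by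
    refine ⟨(hm.pow_const 2).aestronglyMeasurable, ?_⟩
    rw [hasFiniteIntegral_iff_norm]
    have h : ∫⁻ a, ENNReal.ofReal ‖X a ^ 2‖ ∂μ = ∫⁻ a, ENNReal.ofReal (X a ^ 2) ∂μ := by
      apply lintegral_congr_ae
      filter_upwards with ω
      rw [Real.norm_eq_abs, abs_of_nonneg (sq_nonneg _)]
    rw [h, key2]
    exact ENNReal.ofReal_lt_top
  have hm2 : (∫ ω, X ω ^ 2 ∂μ) = 2 := by
    rw [integral_eq_lintegral_of_nonneg_ae hnn2 (hm.pow_const 2).aestronglyMeasurable, key2]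
    simp
  exact ⟨hint1, hm1, hint2, hm2⟩



lemma aux_zpow (x : ℝ) : x ^ (-2:ℤ) = (x^2)⁻¹ := by
  rw [show ((-2:ℤ)) = -((2:ℕ):ℤ) by norm_num, zpow_neg, zpow_natCast]

lemma coalRate_nonneg (Λ : Measure ℝ) (b k : ℕ) : 0 ≤ coalRate Λ b k := by
  apply setIntegral_nonneg measurableSet_Ioo
  intro x hx
  have h1 : (0:ℝ) ≤ x := hx.1.le
  have h2 : (0:ℝ) ≤ 1 - x := by linarith [hx.2]
  positivity

lemma aux_binom (b : ℕ) (hb : 2 ≤ b) (x : ℝ) :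
    x^2 * ∑ ℓ ∈ Finset.Icc 1 (b-1), (b.choose (ℓ+1) : ℝ) * (x ^ (ℓ+1-2) * (1-x) ^ (b-(ℓ+1)))
      = 1 - (1-x)^b - b*x*(1-x)^(b-1) := by
  have step1 : x^2 * ∑ ℓ ∈ Finset.Icc 1 (b-1),
      (b.choose (ℓ+1) : ℝ) * (x ^ (ℓ+1-2) * (1-x) ^ (b-(ℓ+1)))
      = ∑ ℓ ∈ Finset.Icc 1 (b-1), (b.choose (ℓ+1) : ℝ) * (x ^ (ℓ+1) * (1-x) ^ (b-(ℓ+1))) := by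
    rw [Finset.mul_sum]
    apply Finset.sum_congr rfl
    intro ℓ hℓ
    obtain ⟨h1, h2⟩ := Finset.mem_Icc.1 hℓ
    have he : ℓ + 1 - 2 = ℓ - 1 := by omega
    have he2 : 2 + (ℓ - 1) = ℓ + 1 := by omega
    rw [he]
    rw [show x^2 * ((b.choose (ℓ+1):ℝ) * (x ^ (ℓ-1) * (1-x)^(b-(ℓ+1))))
      = (b.choose (ℓ+1):ℝ) * ((x^2 * x^(ℓ-1)) * (1-x)^(b-(ℓ+1))) by ring, ← pow_add, he2]
  rw [step1]
  have step2 : ∑ ℓ ∈ Finset.Icc 1 (b-1), (b.choose (ℓ+1) : ℝ) * (x ^ (ℓ+1) * (1-x) ^ (b-(ℓ+1)))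
      = ∑ k ∈ Finset.Icc 2 b, (b.choose k : ℝ) * (x ^ k * (1-x) ^ (b-k)) := by
    apply Finset.sum_nbij' (fun ℓ => ℓ + 1) (fun k => k - 1)
    · intro ℓ hℓ; obtain ⟨h1,h2⟩ := Finset.mem_Icc.1 hℓ; apply Finset.mem_Icc.2; omega
    · intro k hk; obtain ⟨h1,h2⟩ := Finset.mem_Icc.1 hk; apply Finset.mem_Icc.2; omega
    · intro ℓ hℓ; omega
    · intro k hk; obtain ⟨h1,h2⟩ := Finset.mem_Icc.1 hk; omega
    · intro ℓ hℓ; rfl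
  rw [step2]
  have hins : Finset.range (b+1) = insert 0 (insert 1 (Finset.Icc 2 b)) := by
    ext j; simp [Finset.mem_range, Finset.mem_Icc]; omega
  have hadd := add_pow x (1-x) b
  rw [show x + (1-x) = 1 by ring, one_pow, hins] at hadd
  rw [Finset.sum_insert (by simp), Finset.sum_insert (by norm_num)] at hadd
  simp only [pow_zero, Nat.choose_zero_right, Nat.choose_one_right, Nat.sub_zero,
    Nat.cast_one, pow_one] at hadd
  have : ∑ k ∈ Finset.Icc 2 b, x ^ k * (1-x) ^ (b-k) * (b.choose k : ℝ)
      = ∑ k ∈ Finset.Icc 2 b, (b.choose k : ℝ) * (x ^ k * (1-x) ^ (b-k)) := by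
    apply Finset.sum_congr rfl; intro k _; ring
  rw [this] at hadd
  -- hadd : 1 = (1-x)^b * 1 + x*(1-x)^(b-1)*b + ∑ ...
  nlinarith [hadd]

lemma aux_onethirteen (b : ℕ) (hb : 2 ≤ b) (x : ℝ) (hx0 : 1/(b:ℝ) < x) (hx1 : x < 1) :
    (1/13 : ℝ) ≤ 1 - (1-x)^b - b*x*(1-x)^(b-1) := by
  have hbR : (2:ℝ) ≤ (b:ℝ) := by exact_mod_cast hb
  have hxpos : 0 < x := lt_trans (by positivity) hx0
  set m : ℕ := b - 1 with hm
  have hbm : b = m + 1 := by omega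
  have hmR : ((m:ℝ)) = (b:ℝ) - 1 := by rw [hbm]; push_cast; ring
  have hm1 : (1:ℝ) ≤ (m:ℝ) := by rw [hmR]; linarith
  set u : ℝ := (m:ℝ) * x with hu
  have hu2 : 1/2 ≤ u := by
    have hxb : 1/(b:ℝ) < x := hx0
    have hbpos : (0:ℝ) < (b:ℝ) := by linarith
    have : (m:ℝ)/(b:ℝ) ≤ u := by
      rw [hu, div_le_iff₀ hbpos]
      have h1 : (m:ℝ) ≤ (m:ℝ) * (x * b) := by
        have : (1:ℝ) ≤ x * b := by
          rw [div_lt_iff₀ hbpos] at hxb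
          linarith
        nlinarith [hm1]
      linarith [h1]
    have h2 : (1:ℝ)/2 ≤ (m:ℝ)/(b:ℝ) := by
      rw [div_le_div_iff₀ (by norm_num) (by linarith)]
      rw [hmR]; linarith
    linarith
  have hkey : (1-x)^b + (b:ℝ)*x*(1-x)^(b-1) = (1-x)^m * (1 + u) := by
    rw [hu, hbm]
    simp only [Nat.add_sub_cancel]
    push_cast
    rw [pow_succ]
    ring
  have h1x : (0:ℝ) ≤ 1 - x := by linarith
  have hexp : (1-x)^m ≤ Real.exp (-x) ^ m := by
    apply pow_le_pow_left₀ h1x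
    linarith [Real.add_one_le_exp (-x)]
  have hexp2 : Real.exp (-x) ^ m = Real.exp (-u) := by
    rw [← Real.exp_nat_mul, hu]; ring_nf
  have hquad : 1 + u + u^2/2 ≤ Real.exp u := Real.quadratic_le_exp_of_nonneg (by linarith)
  have hup : (0:ℝ) < 1 + u := by linarith
  have hbound : Real.exp (-u) * (1 + u) ≤ 12/13 := by
    rw [Real.exp_neg]
    rw [inv_mul_le_iff₀ (Real.exp_pos u)]
    have h13 : (12:ℝ)/13 * (1 + u + u^2/2) ≤ 12/13 * Real.exp u := by nlinarith
    nlinarith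
  have hfin : (1-x)^m * (1 + u) ≤ 12/13 := by
    calc (1-x)^m * (1 + u) ≤ Real.exp (-u) * (1 + u) := by
          apply mul_le_mul_of_nonneg_right _ hup.le
          rw [← hexp2]; exact hexp
      _ ≤ 12/13 := hbound
  rw [← hkey] at hfin
  linarith

lemma aux_pointwise (b : ℕ) (hb : 2 ≤ b) (x : ℝ) (hx0 : 1/(b:ℝ) < x) (hx1 : x < 1) :
    (1/13 : ℝ) * (x ^ (-2:ℤ)) ≤
      ∑ ℓ ∈ Finset.Icc 1 (b-1), (b.choose (ℓ+1) : ℝ) * (x ^ (ℓ+1-2) * (1-x) ^ (b-(ℓ+1))) := by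
  have hxpos : 0 < x := lt_trans (by positivity) hx0
  have hx2 : (0:ℝ) < x^2 := by positivity
  rw [aux_zpow]
  rw [show (1/13 : ℝ) * (x^2)⁻¹ = (1/13)/(x^2) by ring, div_le_iff₀ hx2]
  have := aux_onethirteen b hb x hx0 hx1
  have hbinom := aux_binom b hb x
  nlinarith [hbinom, this]

lemma aux_phi_integrable (Λ : Measure ℝ) [IsFiniteMeasure Λ] (j k : ℕ) :
    IntegrableOn (fun x : ℝ => x ^ j * (1-x) ^ k) (Set.Ioo 0 1) Λ := by
  have hmeas : Measurable (fun x : ℝ => x ^ j * (1-x) ^ k) :=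
    (measurable_id.pow_const j).mul ((measurable_const.sub measurable_id).pow_const k)
  refine Integrable.mono' (integrable_const 1) hmeas.aestronglyMeasurable ?_
  filter_upwards [ae_restrict_mem measurableSet_Ioo] with x hx
  have h1 : (0:ℝ) ≤ x := hx.1.le
  have h2 : (0:ℝ) ≤ 1 - x := by linarith [hx.2]
  rw [Real.norm_eq_abs, abs_of_nonneg (by positivity)]
  calc x ^ j * (1-x) ^ k ≤ 1 * 1 := by
        apply mul_le_mul _ _ (by positivity) (by norm_num)
        · exact pow_le_one₀ h1 (by linarith [hx.2])
        · exact pow_le_one₀ h2 (by linarith [hx.1])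
    _ = 1 := by norm_num

lemma aux_inv_sq_integrable (Λ : Measure ℝ) [IsFiniteMeasure Λ] {t : ℝ} (ht : 0 < t)
    {s : Set ℝ} (hs : MeasurableSet s) (hsub : s ⊆ Set.Ioi t) :
    IntegrableOn (fun x : ℝ => x ^ (-2:ℤ)) s Λ := by
  have hmeas : Measurable (fun x : ℝ => x ^ (-2:ℤ)) := by
    have : (fun x : ℝ => x ^ (-2:ℤ)) = fun x : ℝ => (x^2)⁻¹ := funext aux_zpow
    rw [this]
    exact (measurable_id.pow_const 2).inv
  refine Integrable.mono' (integrable_const ((t^2)⁻¹)) hmeas.aestronglyMeasurable ?_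
  filter_upwards [ae_restrict_mem hs] with x hx
  have hxt : t < x := hsub hx
  have hx0 : 0 < x := lt_trans ht hxt
  rw [aux_zpow, Real.norm_eq_abs, abs_of_nonneg (by positivity)]
  apply inv_anti₀ (by positivity)
  nlinarith

lemma coalG_lower (Λ : Measure ℝ) [IsFiniteMeasure Λ] (α C₀ ζ : ℝ)
    (hα₁ : 1 < α) (hζ0 : 0 < ζ)
    (hg : ∀ b : ℕ, 2 ≤ b → 0 < coalG Λ b) (hC₀ : 0 < C₀) (hρ : RhoBound Λ C₀ α ζ) :
    ∃ a : ℝ, 0 < a ∧ ∀ b : ℕ, 2 ≤ b → a * (b:ℝ) ^ α ≤ coalG Λ b := by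
  obtain ⟨Cρ, hCρ⟩ := hρ
  set C' : ℝ := max Cρ 0 with hC'
  have hC'0 : 0 ≤ C' := le_max_right _ _
  set T : ℝ := (Λ Set.univ).toReal with hT
  have hT0 : 0 ≤ T := ENNReal.toReal_nonneg
  have hα0 : (0:ℝ) < α := by linarith
  -- main integral estimate for every b ≥ 2
  have hmain : ∀ b : ℕ, 2 ≤ b →
      (1/13) * (C₀ * (b:ℝ)^α - C' * (b:ℝ)^(α - ζ) - T) ≤ coalG Λ b := by
    intro b hb
    have hbR : (2:ℝ) ≤ (b:ℝ) := by exact_mod_cast hb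
    have hb0 : (0:ℝ) < (b:ℝ) := by linarith
    set t0 : ℝ := ((b:ℝ))⁻¹ with ht0def
    have ht00 : 0 < t0 := by positivity
    have ht01 : t0 < 1 := by
      rw [ht0def]
      rw [inv_lt_one_iff₀]
      right; linarith
    -- integrability of summands
    have hφint : ∀ ℓ : ℕ, IntegrableOn
        (fun x : ℝ => (b.choose (ℓ+1) : ℝ) * (x ^ (ℓ+1-2) * (1-x) ^ (b-(ℓ+1))))
        (Set.Ioo 0 1) Λ :=
      fun ℓ => (aux_phi_integrable Λ _ _).const_mul _
    have hsub01 : Set.Ioo t0 1 ⊆ Set.Ioo (0:ℝ) 1 :=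
      Set.Ioo_subset_Ioo (le_of_lt ht00) le_rfl
    have hφint' : ∀ ℓ : ℕ, IntegrableOn
        (fun x : ℝ => (b.choose (ℓ+1) : ℝ) * (x ^ (ℓ+1-2) * (1-x) ^ (b-(ℓ+1))))
        (Set.Ioo t0 1) Λ := fun ℓ => (hφint ℓ).mono_set hsub01
    -- step 1: restrict the integrals
    have hstep1 : ∫ x in Set.Ioo t0 1,
        (∑ ℓ ∈ Finset.Icc 1 (b-1), (b.choose (ℓ+1):ℝ) * (x ^ (ℓ+1-2) * (1-x)^(b-(ℓ+1)))) ∂Λ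
        ≤ coalG Λ b := by
      rw [integral_finset_sum _ (fun ℓ _ => hφint' ℓ)]
      unfold coalG coalRate
      apply Finset.sum_le_sum
      intro ℓ hℓ
      rw [integral_const_mul]
      apply mul_le_mul_of_nonneg_left _ (Nat.cast_nonneg _)
      apply setIntegral_mono_set (aux_phi_integrable Λ _ _) ?_ (HasSubset.Subset.eventuallyLE hsub01)
      filter_upwards [ae_restrict_mem measurableSet_Ioo] with x hx
      have h1 : (0:ℝ) ≤ x := hx.1.le
      have h2 : (0:ℝ) ≤ 1 - x := by linarith [hx.2]
      positivity
    -- step 2: pointwise lower bound on Ioo t0 1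
    have hstep2 : (1/13) * ∫ x in Set.Ioo t0 1, x ^ (-2:ℤ) ∂Λ ≤
        ∫ x in Set.Ioo t0 1,
        (∑ ℓ ∈ Finset.Icc 1 (b-1), (b.choose (ℓ+1):ℝ) * (x ^ (ℓ+1-2) * (1-x)^(b-(ℓ+1)))) ∂Λ := by
      rw [← integral_const_mul]
      apply setIntegral_mono_on
      · exact ((aux_inv_sq_integrable Λ ht00 measurableSet_Ioo
          (fun x hx => hx.1)).const_mul (1/13))
      · exact integrable_finset_sum _ (fun ℓ _ => hφint' ℓ)
      · exact measurableSet_Ioo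
      · intro x hx
        refine aux_pointwise b hb x ?_ hx.2
        rw [one_div]
        exact hx.1
    -- step 3: relate to coalRho
    have hstep3 : coalRho Λ t0 - T ≤ ∫ x in Set.Ioo t0 1, x ^ (-2:ℤ) ∂Λ := by
      have hsplit : Set.Ioc t0 1 = Set.Ioo t0 1 ∪ {1} := by
        rw [Set.Ioo_union_right ht01]
      have hdisj : Disjoint (Set.Ioo t0 (1:ℝ)) {1} := by
        simp [Set.disjoint_singleton_right]
      have h1 : coalRho Λ t0 = (∫ x in Set.Ioo t0 1, x ^ (-2:ℤ) ∂Λ)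
          + ∫ x in ({1} : Set ℝ), x ^ (-2:ℤ) ∂Λ := by
        unfold coalRho
        rw [hsplit, setIntegral_union hdisj (measurableSet_singleton 1)
          (aux_inv_sq_integrable Λ ht00 measurableSet_Ioo (fun x hx => hx.1))
          (aux_inv_sq_integrable Λ ht00 (measurableSet_singleton 1)
            (fun x hx => by simp at hx; rw [hx]; exact ht01))]
      have h2 : ∫ x in ({1} : Set ℝ), x ^ (-2:ℤ) ∂Λ ≤ T := by
        rw [integral_singleton]
        simp only [aux_zpow, one_pow, inv_one, smul_eq_mul, mul_one]
        rw [hT]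
        exact ENNReal.toReal_mono (measure_ne_top Λ _) (measure_mono (Set.subset_univ _))
      linarith [h1, h2]
    -- step 4: rho bound
    have ht0mem : t0 ∈ Set.Ioc (0:ℝ) 1 := ⟨ht00, le_of_lt ht01⟩
    have hrho := hCρ t0 ht0mem
    have habs : coalRho Λ t0 ≥ C₀ * t0 ^ (-α) - C' * t0 ^ (ζ - α) := by
      have h1 : |coalRho Λ t0 - C₀ * t0 ^ (-α)| ≤ C' * t0 ^ (ζ - α) := by
        apply le_trans hrho
        apply mul_le_mul_of_nonneg_right (le_max_left _ _)
        exact Real.rpow_nonneg (le_of_lt ht00) _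
      have := abs_le.1 h1
      linarith [this.1]
    have hpow1 : t0 ^ (-α) = (b:ℝ) ^ α := by
      rw [ht0def, ← Real.rpow_neg_one ((b:ℝ)), ← Real.rpow_mul (le_of_lt hb0),
        show (-1:ℝ)*(-α) = α by ring]
    have hpow2 : t0 ^ (ζ - α) = (b:ℝ) ^ (α - ζ) := by
      rw [ht0def, ← Real.rpow_neg_one ((b:ℝ)), ← Real.rpow_mul (le_of_lt hb0),
        show (-1:ℝ)*(ζ-α) = α - ζ by ring]
    rw [hpow1, hpow2] at habs
    have : C₀ * (b:ℝ)^α - C' * (b:ℝ)^(α - ζ) - T ≤ ∫ x in Set.Ioo t0 1, x ^ (-2:ℤ) ∂Λ := by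
      have := hstep3
      linarith [habs]
    calc (1/13) * (C₀ * (b:ℝ)^α - C' * (b:ℝ)^(α - ζ) - T)
        ≤ (1/13) * ∫ x in Set.Ioo t0 1, x ^ (-2:ℤ) ∂Λ := by linarith
      _ ≤ _ := le_trans hstep2 hstep1
  -- asymptotics: find b₀
  have htend1 : Tendsto (fun b : ℕ => C' * (b:ℝ)^(-ζ)) atTop (𝓝 (C' * 0)) := by
    exact ((tendsto_rpow_neg_atTop hζ0).comp tendsto_natCast_atTop_atTop).const_mul C'
  rw [mul_zero] at htend1
  have hev1 : ∀ᶠ b : ℕ in atTop, C' * (b:ℝ)^(-ζ) < C₀/4 :=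
    htend1.eventually_lt_const (by positivity)
  have htend2 : Tendsto (fun b : ℕ => (b:ℝ)^α) atTop atTop :=
    (tendsto_rpow_atTop hα0).comp tendsto_natCast_atTop_atTop
  have hev2 : ∀ᶠ b : ℕ in atTop, 4*T/C₀ + 1 ≤ (b:ℝ)^α :=
    htend2.eventually_ge_atTop _
  obtain ⟨b₁, hb₁⟩ := (hev1.and hev2).exists_forall_of_atTop
  set b₀ : ℕ := max b₁ 2 with hb₀def
  have hb₀2 : 2 ≤ b₀ := le_max_right _ _
  have hlarge : ∀ b : ℕ, b₀ ≤ b → (C₀/26) * (b:ℝ)^α ≤ coalG Λ b := by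
    intro b hbb
    have hb2 : 2 ≤ b := le_trans hb₀2 hbb
    have hbR : (2:ℝ) ≤ (b:ℝ) := by exact_mod_cast hb2
    have hb0 : (0:ℝ) < (b:ℝ) := by linarith
    obtain ⟨h1, h2⟩ := hb₁ b (le_trans (le_max_left _ _) hbb)
    have hsplit : (b:ℝ)^(α - ζ) = (b:ℝ)^α * (b:ℝ)^(-ζ) := by
      rw [← Real.rpow_add hb0, show α + -ζ = α - ζ by ring]
    have hAnn : (0:ℝ) ≤ (b:ℝ)^α := Real.rpow_nonneg (le_of_lt hb0) _
    have key : C₀ * (b:ℝ)^α - C' * (b:ℝ)^(α-ζ) - T ≥ (C₀/2) * (b:ℝ)^α := by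
      have hx1 : C' * (b:ℝ)^(α-ζ) ≤ (C₀/4) * (b:ℝ)^α := by
        rw [hsplit, show C' * ((b:ℝ)^α * (b:ℝ)^(-ζ)) = (C' * (b:ℝ)^(-ζ)) * (b:ℝ)^α by ring]
        exact mul_le_mul_of_nonneg_right (le_of_lt h1) hAnn
      have hx2 : T ≤ (C₀/4) * (b:ℝ)^α := by
        have : (C₀/4) * (4*T/C₀ + 1) ≤ (C₀/4) * (b:ℝ)^α :=
          mul_le_mul_of_nonneg_left h2 (by positivity)
        have heq : (C₀/4) * (4*T/C₀ + 1) = T + C₀/4 := by field_simp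
        nlinarith
      nlinarith
    have := hmain b hb2
    nlinarith [key, this]
  -- small values
  have hne : (Finset.Icc 2 b₀).Nonempty := ⟨2, Finset.mem_Icc.2 ⟨le_rfl, hb₀2⟩⟩
  set a₂ : ℝ := (Finset.Icc 2 b₀).inf' hne (fun b => coalG Λ b / (b:ℝ)^α) with ha₂
  have ha₂pos : 0 < a₂ := by
    rw [ha₂, Finset.lt_inf'_iff]
    intro b hb
    obtain ⟨h1, _⟩ := Finset.mem_Icc.1 hb
    have hb0 : (0:ℝ) < (b:ℝ) := by positivity
    exact div_pos (hg b h1) (Real.rpow_pos_of_pos hb0 _)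
  refine ⟨min (C₀/26) a₂, lt_min (by positivity) ha₂pos, ?_⟩
  intro b hb
  have hb0 : (0:ℝ) < (b:ℝ) := by positivity
  have hbα : (0:ℝ) < (b:ℝ)^α := Real.rpow_pos_of_pos hb0 _
  rcases le_total b b₀ with hcase | hcase
  · have hmem : b ∈ Finset.Icc 2 b₀ := Finset.mem_Icc.2 ⟨hb, hcase⟩
    have hle : a₂ ≤ coalG Λ b / (b:ℝ)^α := Finset.inf'_le _ hmem
    have : min (C₀/26) a₂ ≤ coalG Λ b / (b:ℝ)^α := le_trans (min_le_right _ _) hle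
    rw [le_div_iff₀ hbα] at this
    exact this
  · calc min (C₀/26) a₂ * (b:ℝ)^α ≤ (C₀/26) * (b:ℝ)^α :=
        mul_le_mul_of_nonneg_right (min_le_left _ _) (le_of_lt hbα)
    _ ≤ coalG Λ b := hlarge b hcase




lemma chain_cyl (Λ : Measure ℝ) {Ω : Type*} [MeasurableSpace Ω] (μ : Measure Ω)
    [IsProbabilityMeasure μ] (hg : ∀ b : ℕ, 2 ≤ b → 0 < coalG Λ b)
    (Y : ℕ → Ω → ℕ) (n : ℕ) (hY : IsCoalChain Λ μ Y n) (k : ℕ) (y : ℕ → ℕ) (hb : 2 ≤ y k) :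
    μ {ω | (∀ j ≤ k, Y j ω = y j) ∧ y k ≤ Y (k+1) ω} = 0 := by
  obtain ⟨hmeas, h0, h1, habs, htrans⟩ := hY
  set b : ℕ := y k with hbdef
  set cyl : Set Ω := {ω | ∀ j ≤ k, Y j ω = y j} with hcyl
  have hmeascyl : MeasurableSet cyl := by
    have : cyl = ⋂ j, ⋂ _ : j ≤ k, (Y j)⁻¹' {y j} := by
      ext ω; simp [hcyl, Set.mem_iInter]
    rw [this]
    exact MeasurableSet.iInter fun j => MeasurableSet.iInter fun _ =>
      (hmeas j) (measurableSet_singleton _)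
  set S : ℕ → Set Ω := fun ℓ => {ω | (∀ j ≤ k, Y j ω = y j) ∧ Y (k+1) ω = b - ℓ} with hS
  have hmeasS : ∀ ℓ, MeasurableSet (S ℓ) := by
    intro ℓ
    have : S ℓ = cyl ∩ (Y (k+1))⁻¹' {b - ℓ} := by
      ext ω; simp only [hS, hcyl, Set.mem_inter_iff, Set.mem_preimage,
        Set.mem_singleton_iff, Set.mem_setOf_eq]
    rw [this]
    exact hmeascyl.inter ((hmeas (k+1)) (measurableSet_singleton _))
  have hSsub : ∀ ℓ, S ℓ ⊆ cyl := fun ℓ ω hω => hω.1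
  have hμS : ∀ ℓ ∈ Finset.Icc 1 (b-1), μ (S ℓ) =
      ENNReal.ofReal ((b.choose (ℓ+1) : ℝ) * coalRate Λ b (ℓ+1) / coalG Λ b) * μ cyl := by
    intro ℓ hℓ
    obtain ⟨hℓ1, hℓ2⟩ := Finset.mem_Icc.1 hℓ
    exact htrans k y b ℓ hb hℓ1 hℓ2 rfl
  have hdisj : (↑(Finset.Icc 1 (b-1)) : Set ℕ).PairwiseDisjoint S := by
    intro ℓ hℓ ℓ' hℓ' hne
    simp only [Finset.coe_Icc, Set.mem_Icc] at hℓ hℓ'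
    apply Set.disjoint_left.2
    intro ω hω hω'
    apply hne
    have h1 := hω.2
    have h2 := hω'.2
    omega
  have hsum : μ (⋃ ℓ ∈ Finset.Icc 1 (b-1), S ℓ) = μ cyl := by
    rw [measure_biUnion_finset hdisj (fun ℓ _ => hmeasS ℓ)]
    rw [Finset.sum_congr rfl hμS, ← Finset.sum_mul]
    have : ∑ ℓ ∈ Finset.Icc 1 (b-1),
        ENNReal.ofReal ((b.choose (ℓ+1) : ℝ) * coalRate Λ b (ℓ+1) / coalG Λ b) = 1 := by
      rw [← ENNReal.ofReal_sum_of_nonneg]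
      · have hgb : 0 < coalG Λ b := hg b hb
        rw [show ∑ ℓ ∈ Finset.Icc 1 (b-1),
            ((b.choose (ℓ+1) : ℝ) * coalRate Λ b (ℓ+1) / coalG Λ b)
            = (∑ ℓ ∈ Finset.Icc 1 (b-1), (b.choose (ℓ+1) : ℝ) * coalRate Λ b (ℓ+1)) / coalG Λ b
          from (Finset.sum_div _ _ _).symm]
        rw [show (∑ ℓ ∈ Finset.Icc 1 (b-1), (b.choose (ℓ+1) : ℝ) * coalRate Λ b (ℓ+1))
            = coalG Λ b from rfl]
        rw [div_self (ne_of_gt hgb)]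
        exact ENNReal.ofReal_one
      · intro ℓ _
        have := coalRate_nonneg Λ b (ℓ+1)
        have hgb : 0 < coalG Λ b := hg b hb
        positivity
    rw [this, one_mul]
  have hbig : ⋃ ℓ ∈ Finset.Icc 1 (b-1), S ℓ ⊆ cyl := by
    intro ω hω
    simp only [Set.mem_iUnion] at hω
    obtain ⟨ℓ, _, hω⟩ := hω
    exact hSsub ℓ hω
  have hmeasU : MeasurableSet (⋃ ℓ ∈ Finset.Icc 1 (b-1), S ℓ) :=
    MeasurableSet.biUnion (Finset.countable_toSet _) (fun ℓ _ => hmeasS ℓ)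
  have hdiff : μ (cyl \ ⋃ ℓ ∈ Finset.Icc 1 (b-1), S ℓ) = 0 := by
    rw [measure_diff hbig hmeasU.nullMeasurableSet
      (by rw [hsum]; exact measure_ne_top μ _), hsum, tsub_self]
  apply measure_mono_null _ hdiff
  intro ω hω
  obtain ⟨hω1, hω2⟩ := hω
  constructor
  · exact hω1
  · intro hmem
    simp only [Set.mem_iUnion] at hmem
    obtain ⟨ℓ, hℓ, hωS⟩ := hmem
    obtain ⟨hℓ1, hℓ2⟩ := Finset.mem_Icc.1 hℓ
    have := hωS.2
    omega

lemma chain_decrease_ae (Λ : Measure ℝ) {Ω : Type*} [MeasurableSpace Ω] (μ : Measure Ω)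
    [IsProbabilityMeasure μ] (hg : ∀ b : ℕ, 2 ≤ b → 0 < coalG Λ b)
    (Y : ℕ → Ω → ℕ) (n : ℕ) (hY : IsCoalChain Λ μ Y n) :
    ∀ᵐ ω ∂μ, ∀ k, 2 ≤ Y k ω → Y (k+1) ω < Y k ω := by
  rw [ae_iff]
  set ext : ∀ k : ℕ, (Fin (k+1) → ℕ) → ℕ → ℕ :=
    fun k y j => if h : j ≤ k then y ⟨j, Nat.lt_succ_of_le h⟩ else 0 with hext
  set Z : ∀ k : ℕ, (Fin (k+1) → ℕ) → Set Ω :=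
    fun k y => {ω | (∀ j ≤ k, Y j ω = ext k y j) ∧ 2 ≤ Y k ω ∧ Y k ω ≤ Y (k+1) ω} with hZ
  have hZ0 : ∀ k y, μ (Z k y) = 0 := by
    intro k y
    by_cases hcase : 2 ≤ ext k y k
    · apply measure_mono_null _ (chain_cyl Λ μ hg Y n hY k (ext k y) hcase)
      intro ω hω
      obtain ⟨hω1, hω2, hω3⟩ := hω
      refine ⟨hω1, ?_⟩
      have : Y k ω = ext k y k := hω1 k le_rfl
      omega
    · have : Z k y = ∅ := by
        ext ω
        simp only [hZ, Set.mem_setOf_eq, Set.mem_empty_iff_false, iff_false]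
        intro hω
        obtain ⟨hω1, hω2, _⟩ := hω
        have : Y k ω = ext k y k := hω1 k le_rfl
        omega
      rw [this]; exact measure_empty
  apply measure_mono_null _ (measure_iUnion_null (fun k => measure_iUnion_null (fun y => hZ0 k y)))
  intro ω hω
  simp only [Set.mem_setOf_eq, not_forall] at hω
  obtain ⟨k, hk2, hknot⟩ := hω
  simp only [Set.mem_iUnion]
  refine ⟨k, fun j => Y j.1 ω, ?_, hk2, ?_⟩
  · intro j hj
    simp only [hext]
    rw [dif_pos hj]
  · omega





lemma main_core {Ω : Type*} [MeasurableSpace Ω] (μ : Measure Ω) [IsProbabilityMeasure μ]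
    (Λ : Measure ℝ) [IsFiniteMeasure Λ] (α a : ℝ) (hα₁ : 1 < α) (ha : 0 < a)
    (hal : ∀ b : ℕ, 2 ≤ b → a * (b:ℝ) ^ α ≤ coalG Λ b)
    (hg : ∀ b : ℕ, 2 ≤ b → 0 < coalG Λ b)
    (Y : ℕ → ℕ → Ω → ℕ) (hY : ∀ n, IsCoalChain Λ μ (Y n) n)
    (Ex : ℕ → Ω → ℝ) (hEx : IsExpFamily μ Ex Y)
    (n : ℕ) (hn : 2 ≤ n) (t : ℝ) :
    (∫ ω, (Llen Λ (Y n) Ex n t ω - Ltilde Λ (Y n) n t ω) ^ 2 ∂μ)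
      ≤ a⁻¹ ^ 2 * ∑ b ∈ Finset.Icc 2 n, (b:ℝ) ^ (2 - 2*α) := by
  obtain ⟨hmE, htail, hiid, hindep⟩ := hEx
  obtain ⟨hmeasY, h0Y, h1Y, habsY, htransY⟩ := hY n
  set N : ℕ := ⌊(n : ℝ) * t⌋₊ with hN
  set c : ℕ → ℝ := fun m => (m:ℝ) / coalG Λ m with hc
  set Yvec : Ω → (ℕ → ℕ → ℕ) := fun ω k m => Y m k ω with hYvecdef
  have hYvec : Measurable Yvec :=
    measurable_pi_lambda _ fun k => measurable_pi_lambda _ fun m => (hY m).1 k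
  set tauf : (ℕ → ℕ → ℕ) → ℕ := fun y => sInf {k | y k n = 1} with htaufdef
  have hev : ∀ j, Measurable (fun y : ℕ → ℕ → ℕ => y j n) :=
    fun j => (measurable_pi_apply n).comp (measurable_pi_apply j)
  have htauf : Measurable tauf := by
    apply measurable_to_countable'
    intro m
    match m with
    | 0 =>
      have : tauf ⁻¹' {0} = {y : ℕ → ℕ → ℕ | y 0 n = 1} ∪ ⋂ j, {y : ℕ → ℕ → ℕ | y j n = 1}ᶜ := by
        ext y
        simp only [Set.mem_preimage, Set.mem_singleton_iff, Set.mem_union, Set.mem_iInter,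
          Set.mem_compl_iff, Set.mem_setOf_eq, htaufdef]
        rw [Nat.sInf_eq_zero]
        constructor
        · rintro (h | h)
          · left; exact h
          · right; intro j hj; rw [Set.eq_empty_iff_forall_notMem] at h; exact h j hj
        · rintro (h | h)
          · left; exact h
          · right; rw [Set.eq_empty_iff_forall_notMem]; exact h
      rw [this]
      exact ((hev 0) (measurableSet_singleton 1)).union
        (MeasurableSet.iInter fun j => ((hev j) (measurableSet_singleton 1)).compl)
    | (m+1) =>
      have : tauf ⁻¹' {m+1} = {y : ℕ → ℕ → ℕ | y (m+1) n = 1} ∩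
          ⋂ j, ⋂ _ : j ≤ m, {y : ℕ → ℕ → ℕ | y j n = 1}ᶜ := by
        ext y
        simp only [Set.mem_preimage, Set.mem_singleton_iff, Set.mem_inter_iff, Set.mem_iInter,
          Set.mem_compl_iff, Set.mem_setOf_eq, htaufdef]
        constructor
        · intro h
          have hne : {k | y k n = 1}.Nonempty := by
            by_contra hemp
            rw [Set.not_nonempty_iff_eq_empty] at hemp
            rw [hemp] at h
            simp [Nat.sInf_empty] at h
          have hmem : (m+1) ∈ {k | y k n = 1} := h ▸ Nat.sInf_mem hne
          refine ⟨hmem, fun j hj => ?_⟩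
          exact Nat.notMem_of_lt_sInf (s := {k | y k n = 1}) (m := j) (by rw [h]; omega)
        · rintro ⟨h1, h2⟩
          apply le_antisymm
          · exact Nat.sInf_le h1
          · by_contra hlt
            push_neg at hlt
            have hmem := Nat.sInf_mem (⟨m+1, h1⟩ : {k | y k n = 1}.Nonempty)
            rcases Nat.lt_succ_iff.1 hlt with h
            exact h2 _ h hmem
      rw [this]
      exact (((hev (m+1)) (measurableSet_singleton 1)).inter
        (MeasurableSet.iInter fun j => MeasurableSet.iInter fun _ =>
          ((hev j) (measurableSet_singleton 1)).compl))
  set f : ℕ → (ℕ → ℕ → ℕ) → ℝ := fun k y => if k ≤ min N (tauf y - 1) then c (y k n) else 0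
    with hfdef
  have hf : ∀ k, Measurable (f k) := by
    intro k
    apply Measurable.ite _ ((measurable_from_top (f := c)).comp (hev k)) measurable_const
    have : {y : ℕ → ℕ → ℕ | k ≤ min N (tauf y - 1)} =
        tauf ⁻¹' {m | k ≤ min N (m - 1)} := rfl
    rw [this]
    exact htauf (by trivial)
  set A : ℕ → Ω → ℝ := fun k ω => f k (Yvec ω) with hAdef
  set B : ℕ → Ω → ℝ := fun k ω => Ex k ω - 1 with hBdef
  have hmeasA : ∀ k, Measurable (A k) := fun k => (hf k).comp hYvec
  have hAeq : ∀ k ω, A k ω =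
      if k ≤ min N (coalTau (Y n) ω - 1) then c (Y n k ω) else 0 := fun k ω => rfl
  -- pointwise facts
  have hY2 : ∀ ω k, k ≤ min N (coalTau (Y n) ω - 1) → 2 ≤ Y n k ω := by
    intro ω k hk
    have h1 := h1Y k ω
    by_contra h
    have hYk1 : Y n k ω = 1 := by omega
    have hτ : coalTau (Y n) ω ≤ k := Nat.sInf_le hYk1
    have hk' : k ≤ coalTau (Y n) ω - 1 := le_trans hk (min_le_right _ _)
    rcases Nat.eq_zero_or_pos (coalTau (Y n) ω) with hz | hp
    · rw [hz] at hk'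
      simp at hk'
      rw [hk'] at hYk1
      rw [h0Y ω] at hYk1
      omega
    · omega
  have haInv : (0:ℝ) ≤ a⁻¹ := inv_nonneg.2 ha.le
  have hcb : ∀ b : ℕ, 2 ≤ b → c b ≤ a⁻¹ * (b:ℝ) ^ (1 - α) := by
    intro b hb
    have hbR : (2:ℝ) ≤ (b:ℝ) := by exact_mod_cast hb
    have hb0 : (0:ℝ) < (b:ℝ) := by linarith
    have hgb := hg b hb
    have hab := hal b hb
    have habp : (0:ℝ) < a * (b:ℝ)^α := by
      have := Real.rpow_pos_of_pos hb0 α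
      positivity
    have h1 : c b ≤ (b:ℝ) / (a * (b:ℝ)^α) := by
      simp only [hc]
      exact div_le_div_of_nonneg_left hb0.le habp hab
    have h2 : (b:ℝ) / (a * (b:ℝ)^α) = a⁻¹ * (b:ℝ)^(1-α) := by
      rw [Real.rpow_sub hb0, Real.rpow_one]
      field_simp
    linarith [h1, h2 ▸ h1]
  have hcbnn : ∀ b : ℕ, 0 ≤ c b := by
    intro b
    rcases Nat.lt_or_ge b 2 with hb | hb
    · interval_cases b <;> simp [hc, coalG]
    · exact div_nonneg (Nat.cast_nonneg b) (hg b hb).le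
  have hbA : ∀ k ω, |A k ω| ≤ a⁻¹ := by
    intro k ω
    rw [hAeq]
    split_ifs with hif
    · have h2 := hY2 ω k hif
      have hbR : (1:ℝ) ≤ (Y n k ω : ℝ) := by
        have : (1:ℕ) ≤ Y n k ω := by omega
        exact_mod_cast this
      rw [abs_of_nonneg (hcbnn _)]
      calc c (Y n k ω) ≤ a⁻¹ * ((Y n k ω : ℝ)) ^ (1-α) := hcb _ h2
        _ ≤ a⁻¹ * 1 := by
            apply mul_le_mul_of_nonneg_left _ haInv
            exact Real.rpow_le_one_of_one_le_of_nonpos hbR (by linarith)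
        _ = a⁻¹ := mul_one _
    · simpa using haInv
  have hintA : ∀ k, Integrable (A k) μ := by
    intro k
    refine Integrable.mono' (integrable_const a⁻¹) (hmeasA k).aestronglyMeasurable ?_
    filter_upwards with ω
    rw [Real.norm_eq_abs]
    exact hbA k ω
  have hintA2 : ∀ k j, Integrable (fun ω => A k ω * A j ω) μ := by
    intro k j
    refine Integrable.mono' (integrable_const (a⁻¹ * a⁻¹))
      ((hmeasA k).mul (hmeasA j)).aestronglyMeasurable ?_
    filter_upwards with ω
    rw [Real.norm_eq_abs, abs_mul]
    exact mul_le_mul (hbA k ω) (hbA j ω) (abs_nonneg _) haInv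
  -- exponential moments
  have hmom := fun k => aux_exp_moments μ (Ex k) (hmE k) (htail k)
  have hintB : ∀ k, Integrable (B k) μ := fun k => (hmom k).1.sub (integrable_const 1)
  have hintBmul : ∀ k j, Integrable (fun ω => B k ω * B j ω) μ := by
    intro k j
    rcases eq_or_ne k j with rfl | hne
    · have h1 : Integrable (fun ω => Ex k ω ^ 2 - 2 * Ex k ω) μ :=
        ((hmom k).2.2.1).sub ((hmom k).1.const_mul 2)
      have hexp : Integrable (fun ω => Ex k ω ^ 2 - 2 * Ex k ω + 1) μ :=
        h1.add (integrable_const 1)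
      exact hexp.congr (by filter_upwards with ω; simp only [hBdef]; ring)
    · have hI : IndepFun (B k) (B j) μ :=
        (hiid.indepFun hne).comp (measurable_id.sub_const 1) (measurable_id.sub_const 1)
      exact hI.integrable_mul (hintB k) (hintB j)
  have hintTerm : ∀ k j, Integrable (fun ω => (A k ω * B k ω) * (A j ω * B j ω)) μ := by
    intro k j
    have h1 : Integrable (fun ω => (A k ω * A j ω) * (B k ω * B j ω)) μ := by
      refine Integrable.bdd_mul (c := a⁻¹ * a⁻¹) (hintBmul k j)
        ((hmeasA k).mul (hmeasA j)).aestronglyMeasurable ?_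
      filter_upwards with ω
      rw [Real.norm_eq_abs, abs_mul]
      exact mul_le_mul (hbA k ω) (hbA j ω) (abs_nonneg _) haInv
    exact h1.congr (by filter_upwards with ω; ring)
  have hBint : ∀ k, (∫ ω, B k ω ∂μ) = 0 := by
    intro k
    rw [hBdef]
    simp only
    rw [integral_sub (hmom k).1 (integrable_const 1), (hmom k).2.1, integral_const]
    simp
  have hBmul : ∀ k j, k ≠ j → (∫ ω, B k ω * B j ω ∂μ) = 0 := by
    intro k j hne
    have hI : IndepFun (B k) (B j) μ :=
      (hiid.indepFun hne).comp (measurable_id.sub_const 1) (measurable_id.sub_const 1)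
    rw [hI.integral_fun_mul_eq_mul_integral ((hmE k).sub_const 1).aestronglyMeasurable
      ((hmE j).sub_const 1).aestronglyMeasurable, hBint k, hBint j, mul_zero]
  have hBsq : ∀ k, (∫ ω, B k ω * B k ω ∂μ) = 1 := by
    intro k
    have hI1 : Integrable (fun ω => Ex k ω ^ 2 - 2 * Ex k ω) μ :=
      ((hmom k).2.2.1).sub ((hmom k).1.const_mul 2)
    have hcong : (∫ ω, B k ω * B k ω ∂μ) = ∫ ω, (Ex k ω ^ 2 - 2 * Ex k ω) + 1 ∂μ := by
      apply integral_congr_ae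
      filter_upwards with ω
      simp only [hBdef]; ring
    rw [hcong, integral_add hI1 (integrable_const 1),
      integral_sub (hmom k).2.2.1 ((hmom k).1.const_mul 2), integral_const_mul,
      (hmom k).2.2.2, (hmom k).2.1, integral_const]
    simp
  -- independence of A-products and B-products
  have hABindep : ∀ k j, IndepFun (fun ω => A k ω * A j ω) (fun ω => B k ω * B j ω) μ := by
    intro k j
    have hfmul : Measurable (fun y : ℕ → ℕ → ℕ => f k y * f j y) := (hf k).mul (hf j)
    have hgmul : Measurable (fun e : ℕ → ℝ => (e k - 1) * (e j - 1)) :=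
      ((measurable_pi_apply k).sub measurable_const).mul
        ((measurable_pi_apply j).sub measurable_const)
    exact hindep.symm.comp hfmul hgmul
  have hterm : ∀ k j, (∫ ω, (A k ω * B k ω) * (A j ω * B j ω) ∂μ)
      = if k = j then (∫ ω, (A k ω)^2 ∂μ) else 0 := by
    intro k j
    have hcong : (∫ ω, (A k ω * B k ω) * (A j ω * B j ω) ∂μ)
        = ∫ ω, (A k ω * A j ω) * (B k ω * B j ω) ∂μ := by
      apply integral_congr_ae
      filter_upwards with ω
      ring
    rw [hcong, (hABindep k j).integral_fun_mul_eq_mul_integral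
      ((hmeasA k).mul (hmeasA j)).aestronglyMeasurable
      (((hmE k).sub_const 1).mul ((hmE j).sub_const 1)).aestronglyMeasurable]
    rcases eq_or_ne k j with rfl | hne
    · rw [if_pos rfl, hBsq k, mul_one]
      apply integral_congr_ae
      filter_upwards with ω
      ring
    · rw [if_neg hne, hBmul k j hne, mul_zero]
  -- pointwise identity for the difference
  have hdiff : ∀ ω, Llen Λ (Y n) Ex n t ω - Ltilde Λ (Y n) n t ω
      = ∑ k ∈ Finset.range (N+1), A k ω * B k ω := by
    intro ω
    set K : ℕ := min N (coalTau (Y n) ω - 1) with hK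
    have hKN : K ≤ N := min_le_left _ _
    have hsub : Finset.range (K+1) ⊆ Finset.range (N+1) := by
      apply Finset.range_subset_range.2; omega
    have e1 : Llen Λ (Y n) Ex n t ω - Ltilde Λ (Y n) n t ω
        = ∑ k ∈ Finset.range (K+1), c (Y n k ω) * B k ω := by
      unfold Llen Ltilde
      rw [← Finset.sum_sub_distrib]
      apply Finset.sum_congr rfl
      intro k hk
      simp only [hBdef, hc]
      ring
    rw [e1]
    have e2 : ∑ k ∈ Finset.range (N+1), A k ω * B k ω
        = ∑ k ∈ Finset.range (K+1), A k ω * B k ω := by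
      symm
      apply Finset.sum_subset hsub
      intro k hk hnk
      rw [hAeq, if_neg, zero_mul]
      intro hcon
      exact hnk (Finset.mem_range.mpr (Nat.lt_succ_iff.mpr hcon))
    rw [e2]
    apply Finset.sum_congr rfl
    intro k hk
    rw [hAeq, if_pos (Finset.mem_range_succ_iff.mp hk)]
  -- expand the square
  have hsq : (∫ ω, (Llen Λ (Y n) Ex n t ω - Ltilde Λ (Y n) n t ω) ^ 2 ∂μ)
      = ∑ k ∈ Finset.range (N+1), ∑ j ∈ Finset.range (N+1),
          ∫ ω, (A k ω * B k ω) * (A j ω * B j ω) ∂μ := by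
    have h1 : (∫ ω, (Llen Λ (Y n) Ex n t ω - Ltilde Λ (Y n) n t ω) ^ 2 ∂μ)
        = ∫ ω, ∑ k ∈ Finset.range (N+1), ∑ j ∈ Finset.range (N+1),
            (A k ω * B k ω) * (A j ω * B j ω) ∂μ := by
      apply integral_congr_ae
      filter_upwards with ω
      rw [hdiff ω, sq, Finset.sum_mul_sum]
    rw [h1, integral_finset_sum _ (fun k _ => integrable_finset_sum _ (fun j _ => hintTerm k j))]
    apply Finset.sum_congr rfl
    intro k _
    rw [integral_finset_sum _ (fun j _ => hintTerm k j)]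
  rw [hsq]
  have hdiag : ∑ k ∈ Finset.range (N+1), ∑ j ∈ Finset.range (N+1),
      (∫ ω, (A k ω * B k ω) * (A j ω * B j ω) ∂μ)
      = ∑ k ∈ Finset.range (N+1), ∫ ω, (A k ω)^2 ∂μ := by
    apply Finset.sum_congr rfl
    intro k hk
    rw [Finset.sum_congr rfl (fun j _ => hterm k j)]
    rw [Finset.sum_ite_eq _ k (fun _ => ∫ ω, (A k ω)^2 ∂μ)]
    rw [if_pos hk]
  rw [hdiag]
  -- back to a single integral and use the path bound
  have hintA2' : ∀ k, Integrable (fun ω => (A k ω)^2) μ := by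
    intro k
    have := hintA2 k k
    exact this.congr (by filter_upwards with ω; ring)
  rw [← integral_finset_sum _ (fun k _ => hintA2' k)]
  have hGood := chain_decrease_ae Λ μ hg (Y n) n (hY n)
  have hsum_ae : ∀ᵐ ω ∂μ, ∑ k ∈ Finset.range (N+1), (A k ω)^2
      ≤ a⁻¹ ^ 2 * ∑ b ∈ Finset.Icc 2 n, (b:ℝ) ^ (2-2*α) := by
    filter_upwards [hGood] with ω hω
    set K : ℕ := min N (coalTau (Y n) ω - 1) with hK
    have hKN : K ≤ N := min_le_left _ _
    have hsub : Finset.range (K+1) ⊆ Finset.range (N+1) := by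
      apply Finset.range_subset_range.2; omega
    have hanti : ∀ j k : ℕ, j ≤ k → Y n k ω ≤ Y n j ω := by
      have : ∀ m, Y n (m+1) ω ≤ Y n m ω := by
        intro m
        have h1 := h1Y m ω
        rcases Nat.lt_or_ge (Y n m ω) 2 with hm | hm
        · have : Y n m ω = 1 := by omega
          rw [habsY m ω this, this]
        · exact (hω m hm).le
      intro j k hjk
      exact antitone_nat_of_succ_le (f := fun m => Y n m ω) this hjk
    have e1 : ∑ k ∈ Finset.range (N+1), (A k ω)^2
        = ∑ k ∈ Finset.range (K+1), (c (Y n k ω))^2 := by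
      rw [← Finset.sum_subset hsub]
      · apply Finset.sum_congr rfl
        intro k hk
        rw [hAeq, if_pos (Finset.mem_range_succ_iff.mp hk)]
      · intro k hk hnk
        rw [hAeq, if_neg (fun hcon => hnk (Finset.mem_range.mpr (Nat.lt_succ_iff.mpr hcon)))]
        norm_num
    rw [e1]
    have hinj : ∀ j ∈ Finset.range (K+1), ∀ k ∈ Finset.range (K+1),
        Y n j ω = Y n k ω → j = k := by
      intro j hj k hk heq
      have hj' := Finset.mem_range.mp hj
      have hk' := Finset.mem_range.mp hk
      by_contra hne
      rcases Nat.lt_or_ge j k with hjk | hjk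
      · have h2 : 2 ≤ Y n j ω := hY2 ω j (Finset.mem_range_succ_iff.mp hj)
        have := hω j h2
        have h3 : Y n k ω ≤ Y n (j+1) ω := hanti _ _ (by omega)
        omega
      · have hkj : k < j := by omega
        have h2 : 2 ≤ Y n k ω := hY2 ω k (Finset.mem_range_succ_iff.mp hk)
        have := hω k h2
        have h3 : Y n j ω ≤ Y n (k+1) ω := hanti _ _ (by omega)
        omega
    have himg : (Finset.range (K+1)).image (fun k => Y n k ω) ⊆ Finset.Icc 2 n := by
      intro b hb
      rw [Finset.mem_image] at hb
      obtain ⟨k, hk, rfl⟩ := hb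
      apply Finset.mem_Icc.2
      constructor
      · exact hY2 ω k (Finset.mem_range_succ_iff.mp hk)
      · have := hanti 0 k (Nat.zero_le k)
        rw [h0Y ω] at this
        exact this
    calc ∑ k ∈ Finset.range (K+1), (c (Y n k ω))^2
        = ∑ b ∈ (Finset.range (K+1)).image (fun k => Y n k ω), (c b)^2 :=
          (Finset.sum_image (f := fun b => (c b)^2) (g := fun k => Y n k ω) hinj).symm
      _ ≤ ∑ b ∈ Finset.Icc 2 n, (c b)^2 :=
          Finset.sum_le_sum_of_subset_of_nonneg himg (fun b _ _ => sq_nonneg _)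
      _ ≤ ∑ b ∈ Finset.Icc 2 n, a⁻¹^2 * (b:ℝ)^(2-2*α) := by
          apply Finset.sum_le_sum
          intro b hb
          obtain ⟨hb2, hbn⟩ := Finset.mem_Icc.1 hb
          have hbR : (2:ℝ) ≤ (b:ℝ) := by exact_mod_cast hb2
          have hb0 : (0:ℝ) < (b:ℝ) := by linarith
          have h1 : c b ≤ a⁻¹ * (b:ℝ)^(1-α) := hcb b hb2
          have h2 : (c b)^2 ≤ (a⁻¹ * (b:ℝ)^(1-α))^2 := by
            apply pow_le_pow_left₀ (hcbnn b) h1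
          have h3 : (a⁻¹ * (b:ℝ)^(1-α))^2 = a⁻¹^2 * (b:ℝ)^(2-2*α) := by
            rw [mul_pow]
            congr 1
            rw [← Real.rpow_natCast ((b:ℝ)^(1-α)) 2, ← Real.rpow_mul hb0.le]
            norm_num
            rw [show (1-α)*2 = 2-2*α by ring]
          linarith [h2, h3 ▸ h2]
      _ = a⁻¹^2 * ∑ b ∈ Finset.Icc 2 n, (b:ℝ)^(2-2*α) := (Finset.mul_sum _ _ _).symm
  have hintSum : Integrable (fun ω => ∑ k ∈ Finset.range (N+1), (A k ω)^2) μ :=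
    integrable_finset_sum _ (fun k _ => hintA2' k)
  calc (∫ ω, ∑ k ∈ Finset.range (N+1), (A k ω)^2 ∂μ)
      ≤ ∫ _ω, a⁻¹^2 * ∑ b ∈ Finset.Icc 2 n, (b:ℝ)^(2-2*α) ∂μ :=
        integral_mono_ae hintSum (integrable_const _) hsum_ae
    _ = a⁻¹^2 * ∑ b ∈ Finset.Icc 2 n, (b:ℝ)^(2-2*α) := by
        rw [integral_const, probReal_univ, one_smul]

/-- replacing the exponential variables by their means gives
`E[(L_t^{(n)} - L̃_t^{(n)})²] ≤ C n^{3-2α}` if `α < 3/2`, `≤ C log n` if `α = 3/2`, and `≤ C`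
if `α > 3/2`. -/
theorem L_minus_Ltilde_bound
    {Ω : Type*} [MeasurableSpace Ω] (μ : Measure Ω) [IsProbabilityMeasure μ]
    (α γ C₀ ζ : ℝ) (hα₁ : 1 < α) (hα₂ : α < 2) (hγ : γ = α - 1)
    (Λ : Measure ℝ) [IsFiniteMeasure Λ]
    (hg : ∀ b : ℕ, 2 ≤ b → 0 < coalG Λ b)
    (hC₀ : 0 < C₀) (hζ : 1 - 1 / α < ζ) (hρ : RhoBound Λ C₀ α ζ)
    (Y : ℕ → ℕ → Ω → ℕ) (hY : ∀ n, IsCoalChain Λ μ (Y n) n)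
    (Ex : ℕ → Ω → ℝ) (hEx : IsExpFamily μ Ex Y) :
    ∃ C : ℝ, ∀ n : ℕ, 2 ≤ n → ∀ t : ℝ, 0 ≤ t →
      (α < 3 / 2 →
        (∫ ω, (Llen Λ (Y n) Ex n t ω - Ltilde Λ (Y n) n t ω) ^ 2 ∂μ)
          ≤ C * (n : ℝ) ^ (3 - 2 * α)) ∧
      (α = 3 / 2 →
        (∫ ω, (Llen Λ (Y n) Ex n t ω - Ltilde Λ (Y n) n t ω) ^ 2 ∂μ)
          ≤ C * Real.log n) ∧
      (3 / 2 < α →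
        (∫ ω, (Llen Λ (Y n) Ex n t ω - Ltilde Λ (Y n) n t ω) ^ 2 ∂μ) ≤ C) := by
  have hζ0 : 0 < ζ := by
    have h1 : 1/α < 1 := by
      rw [div_lt_one (by linarith)]
      linarith
    linarith
  obtain ⟨a, ha, hal⟩ := coalG_lower Λ α C₀ ζ hα₁ hζ0 hg hC₀ hρ
  have hcore : ∀ n : ℕ, 2 ≤ n → ∀ t : ℝ,
      (∫ ω, (Llen Λ (Y n) Ex n t ω - Ltilde Λ (Y n) n t ω) ^ 2 ∂μ)
        ≤ a⁻¹ ^ 2 * ∑ b ∈ Finset.Icc 2 n, (b:ℝ) ^ (2 - 2*α) :=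
    fun n hn t => main_core μ Λ α a hα₁ ha hal hg Y hY Ex hEx n hn t
  have hainv : (0:ℝ) ≤ a⁻¹ ^ 2 := by positivity
  rcases lt_trichotomy α (3/2) with hcs | hcs | hcs
  · refine ⟨a⁻¹ ^ 2 / (3 - 2*α), ?_⟩
    intro n hn t _
    refine ⟨fun _ => ?_, fun he => absurd he (by linarith), fun hgt => absurd hgt (by linarith)⟩
    calc (∫ ω, (Llen Λ (Y n) Ex n t ω - Ltilde Λ (Y n) n t ω) ^ 2 ∂μ)
        ≤ a⁻¹ ^ 2 * ∑ b ∈ Finset.Icc 2 n, (b:ℝ) ^ (2 - 2*α) := hcore n hn t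
      _ ≤ a⁻¹ ^ 2 * ((n:ℝ) ^ (3 - 2*α) / (3 - 2*α)) :=
          mul_le_mul_of_nonneg_left (aux_sum_rpow_lt hα₁ hcs n (by omega)) hainv
      _ = a⁻¹ ^ 2 / (3 - 2*α) * (n:ℝ) ^ (3 - 2*α) := by ring
  · refine ⟨a⁻¹ ^ 2, ?_⟩
    intro n hn t _
    refine ⟨fun hlt => absurd hcs (by linarith), fun _ => ?_,
      fun hgt => absurd hcs (by linarith)⟩
    have hexp : (2 - 2*α) = (-1 : ℝ) := by rw [hcs]; norm_num
    calc (∫ ω, (Llen Λ (Y n) Ex n t ω - Ltilde Λ (Y n) n t ω) ^ 2 ∂μ)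
        ≤ a⁻¹ ^ 2 * ∑ b ∈ Finset.Icc 2 n, (b:ℝ) ^ (2 - 2*α) := hcore n hn t
      _ = a⁻¹ ^ 2 * ∑ b ∈ Finset.Icc 2 n, (b:ℝ) ^ (-1:ℝ) := by rw [hexp]
      _ ≤ a⁻¹ ^ 2 * Real.log n :=
          mul_le_mul_of_nonneg_left (aux_sum_rpow_eq n (by omega)) hainv
  · refine ⟨a⁻¹ ^ 2 * ∑' b : ℕ, (b:ℝ) ^ (2 - 2*α), ?_⟩
    intro n hn t _
    refine ⟨fun hlt => absurd hcs (by linarith), fun he => absurd he (by linarith),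
      fun _ => ?_⟩
    calc (∫ ω, (Llen Λ (Y n) Ex n t ω - Ltilde Λ (Y n) n t ω) ^ 2 ∂μ)
        ≤ a⁻¹ ^ 2 * ∑ b ∈ Finset.Icc 2 n, (b:ℝ) ^ (2 - 2*α) := hcore n hn t
      _ ≤ a⁻¹ ^ 2 * ∑' b : ℕ, (b:ℝ) ^ (2 - 2*α) :=
          mul_le_mul_of_nonneg_left (aux_sum_rpow_gt hcs n) hainv
end
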